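/- arXiv:1211.6822 — 3 statements merged into one kernel-verified Lean document; each statement's English description precedes it below -/
import Mathlib

section
/- Let −x be symmetric positive definite and y ∈ ℝ^d, and let g(x,y) = ∫_{[0,∞)^d} exp(tᵀxt + yᵀt) dt, viewed as a smooth function of the independent entries x_{ij} (i ≤ j) of x and of y. Then ∂g/∂x_{ij} = 2 ∂²g/∂y_i∂y_j for i < j, and ∂g/∂x_{ii} = ∂²g/∂y_i². -/
open MeasureTheory Real Metric Matrix
set_option synthInstance.maxHeartbeats 1000000
set_option maxHeartbeats 1000000


lemma aux_exp_int (b c : ℝ) (hc : 0 < c) :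
    Integrable (fun u : ℝ => Real.exp (b * u - c * u ^ 2)) := by
  have h : ∀ u : ℝ, b * u - c * u ^ 2 = b ^ 2 / (4 * c) + -c * (u - b / (2 * c)) ^ 2 := by
    intro u; field_simp; ring
  simp_rw [h, Real.exp_add]
  exact (((integrable_exp_neg_mul_sq hc).comp_sub_right (b / (2 * c))).const_mul _)

lemma aux_pow_le (n : ℕ) (u : ℝ) : |u| ^ n ≤ n.factorial * Real.exp |u| := by
  have h1 : |u| ^ n / n.factorial ≤ Real.exp |u| := by
    calc |u| ^ n / n.factorial ≤ ∑ i ∈ Finset.range (n + 1), |u| ^ i / i.factorial := by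
          exact Finset.single_le_sum (f := fun i => |u| ^ i / i.factorial) (fun i _ => by positivity)
            (Finset.mem_range.2 (Nat.lt_succ_self n))
      _ ≤ Real.exp |u| := Real.sum_le_exp_of_nonneg (abs_nonneg u) _
  have hn : (0:ℝ) < n.factorial := by exact_mod_cast n.factorial_pos
  calc |u| ^ n = n.factorial * (|u| ^ n / n.factorial) := by field_simp
    _ ≤ n.factorial * Real.exp |u| := by
        exact mul_le_mul_of_nonneg_left h1 (le_of_lt hn)

lemma aux_1d (n : ℕ) (b e c : ℝ) (hc : 0 < c) :
    Integrable (fun u : ℝ => |u| ^ n * Real.exp (b * u + e * |u| - c * u ^ 2)) := by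
  have hcont : Continuous (fun u : ℝ => |u| ^ n * Real.exp (b * u + e * |u| - c * u ^ 2)) := by
    fun_prop
  refine Integrable.mono
    (g := fun u => (n.factorial : ℝ) *
      (Real.exp ((b + (e + 1)) * u - c * u ^ 2) + Real.exp ((b - (e + 1)) * u - c * u ^ 2)))
    (((aux_exp_int _ _ hc).add (aux_exp_int _ _ hc)).const_mul _)
    hcont.aestronglyMeasurable ?_
  refine Filter.Eventually.of_forall fun u => ?_
  have h1 : |u| ^ n * Real.exp (b * u + e * |u| - c * u ^ 2)
      ≤ (n.factorial : ℝ) * Real.exp (b * u + (e + 1) * |u| - c * u ^ 2) := by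
    calc |u| ^ n * Real.exp (b * u + e * |u| - c * u ^ 2)
        ≤ ((n.factorial : ℝ) * Real.exp |u|) * Real.exp (b * u + e * |u| - c * u ^ 2) :=
          mul_le_mul_of_nonneg_right (aux_pow_le n u) (Real.exp_pos _).le
      _ = (n.factorial : ℝ) * Real.exp (b * u + (e + 1) * |u| - c * u ^ 2) := by
          rw [mul_assoc, ← Real.exp_add]; ring_nf
  have h2 : Real.exp (b * u + (e + 1) * |u| - c * u ^ 2)
      ≤ Real.exp ((b + (e + 1)) * u - c * u ^ 2) + Real.exp ((b - (e + 1)) * u - c * u ^ 2) := by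
    rcases abs_cases u with ⟨h, _⟩ | ⟨h, _⟩
    · rw [h]
      refine le_add_of_le_of_nonneg (Real.exp_le_exp.2 (by ring_nf; exact le_rfl)) (Real.exp_pos _).le
    · rw [h]
      refine le_add_of_nonneg_of_le (Real.exp_pos _).le (Real.exp_le_exp.2 (by ring_nf; exact le_rfl))
  have hnn : 0 ≤ |u| ^ n * Real.exp (b * u + e * |u| - c * u ^ 2) := by positivity
  have hg : 0 ≤ (n.factorial : ℝ) *
      (Real.exp ((b + (e + 1)) * u - c * u ^ 2) + Real.exp ((b - (e + 1)) * u - c * u ^ 2)) := by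
    positivity
  simp only [Real.norm_eq_abs]
  rw [abs_of_nonneg hnn, abs_of_nonneg hg]
  exact h1.trans (mul_le_mul_of_nonneg_left h2 (by positivity))


lemma aux_master (d : ℕ) (p : Fin d → ℕ) (yv : Fin d → ℝ) (e c : ℝ) (hc : 0 < c) :
    Integrable (fun t : Fin d → ℝ =>
      (∏ k, |t k| ^ p k) * Real.exp (∑ k, (yv k * t k + e * |t k| - c * t k ^ 2))) := by
  have := Integrable.fintype_prod
    (f := fun k (u : ℝ) => |u| ^ p k * Real.exp (yv k * u + e * |u| - c * u ^ 2))
    (fun k => aux_1d (p k) (yv k) e c hc)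
  rw [show (fun t : Fin d → ℝ =>
      (∏ k, |t k| ^ p k) * Real.exp (∑ k, (yv k * t k + e * |t k| - c * t k ^ 2)))
      = fun t => ∏ k, (|t k| ^ p k * Real.exp (yv k * t k + e * |t k| - c * t k ^ 2)) from
    funext fun t => by rw [Real.exp_sum, ← Finset.prod_mul_distrib]]
  exact this

lemma aux_coercive {d : ℕ} {x : Matrix (Fin d) (Fin d) ℝ} (hx : (-x).PosDef) :
    ∃ c : ℝ, 0 < c ∧ ∀ t : Fin d → ℝ,
      ∑ a, ∑ b, x a b * t a * t b ≤ -(c * ∑ k, t k ^ 2) := by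
  have hquad : ∀ t : Fin d → ℝ, ∑ a, ∑ b, x a b * t a * t b = -(t ⬝ᵥ ((-x) *ᵥ t)) := by
    intro t
    simp only [dotProduct, Matrix.mulVec, Matrix.neg_apply, dotProduct,
      Finset.mul_sum, ← Finset.sum_neg_distrib]
    refine Finset.sum_congr rfl fun a _ => Finset.sum_congr rfl fun b _ => by ring
  by_cases hd : d = 0
  · subst hd
    exact ⟨1, one_pos, fun t => by simp⟩
  have hdpos : 0 < d := Nat.pos_of_ne_zero hd
  set S : Set (Fin d → ℝ) := {t | ∑ k, t k ^ 2 = 1} with hS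
  have hScl : IsClosed S := isClosed_eq (by fun_prop) continuous_const
  have hSb : Bornology.IsBounded S := by
    refine (Metric.isBounded_iff_subset_closedBall 0).2 ⟨1, fun t ht => ?_⟩
    rw [Metric.mem_closedBall, dist_zero_right]
    refine (pi_norm_le_iff_of_nonneg zero_le_one).2 fun k => ?_
    rw [Real.norm_eq_abs]
    have h1 : t k ^ 2 ≤ 1 := by
      have h2 := Finset.single_le_sum (f := fun k => t k ^ 2) (fun i _ => sq_nonneg (t i))
        (Finset.mem_univ k)
      have h3 : ∑ k, t k ^ 2 = 1 := ht.out
      simpa [h3] using h2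
    nlinarith [sq_abs (t k), abs_nonneg (t k)]
  have hScomp : IsCompact S := Metric.isCompact_of_isClosed_isBounded hScl hSb
  have hSne : S.Nonempty := by
    refine ⟨Pi.single ⟨0, hdpos⟩ 1, ?_⟩
    simp [hS, Pi.single_apply]
  have hcont : Continuous fun t : Fin d → ℝ => t ⬝ᵥ ((-x) *ᵥ t) := by
    simp only [dotProduct, Matrix.mulVec]
    fun_prop
  obtain ⟨u, huS, humin⟩ := hScomp.exists_isMinOn hSne hcont.continuousOn
  have hu0 : u ≠ 0 := by
    intro h
    rw [h] at huS
    simp [hS] at huS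
  have hcpos : 0 < u ⬝ᵥ ((-x) *ᵥ u) := by
    have := hx.dotProduct_mulVec_pos hu0
    simpa using this
  refine ⟨u ⬝ᵥ ((-x) *ᵥ u), hcpos, fun t => ?_⟩
  rw [hquad, neg_le_neg_iff]
  by_cases ht0 : t = 0
  · subst ht0; simp
  -- scaling
  have hsum : 0 < ∑ k, t k ^ 2 := by
    obtain ⟨k, hk⟩ : ∃ k, t k ≠ 0 := by
      by_contra h
      push_neg at h
      exact ht0 (funext fun k => h k)
    exact Finset.sum_pos' (fun i _ => sq_nonneg _) ⟨k, Finset.mem_univ k, by positivity⟩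
  set r : ℝ := Real.sqrt (∑ k, t k ^ 2) with hr
  have hrpos : 0 < r := Real.sqrt_pos.2 hsum
  have hr2 : r ^ 2 = ∑ k, t k ^ 2 := Real.sq_sqrt hsum.le
  have hscale : ∀ (s : ℝ) (v : Fin d → ℝ), (s • v) ⬝ᵥ ((-x) *ᵥ (s • v)) = s ^ 2 * (v ⬝ᵥ ((-x) *ᵥ v)) := by
    intro s v
    simp only [dotProduct, Matrix.mulVec, Pi.smul_apply, smul_eq_mul, Finset.mul_sum]
    exact Finset.sum_congr rfl fun a _ => Finset.sum_congr rfl fun b _ => by ring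
  have huS' : (r⁻¹ • t) ∈ S := by
    simp only [hS, Set.mem_setOf_eq, Pi.smul_apply, smul_eq_mul, mul_pow]
    rw [← Finset.mul_sum, ← hr2]
    field_simp
  have := humin huS'
  have h2 : t = r • (r⁻¹ • t) := by rw [smul_smul, mul_inv_cancel₀ hrpos.ne', one_smul]
  calc (u ⬝ᵥ ((-x) *ᵥ u)) * ∑ k, t k ^ 2 = (u ⬝ᵥ ((-x) *ᵥ u)) * r ^ 2 := by rw [hr2]
    _ ≤ ((r⁻¹ • t) ⬝ᵥ ((-x) *ᵥ (r⁻¹ • t))) * r ^ 2 := by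
        exact mul_le_mul_of_nonneg_right this (by positivity)
    _ = t ⬝ᵥ ((-x) *ᵥ t) := by
        conv_rhs => rw [h2, hscale]
        ring

noncomputable def lin {d : ℕ} (t : Fin d → ℝ) : (Fin d → ℝ) →L[ℝ] ℝ :=
  ∑ a, t a • ContinuousLinearMap.proj a

lemma lin_apply {d : ℕ} (t v : Fin d → ℝ) : lin t v = ∑ a, v a * t a := by
  simp only [lin, ContinuousLinearMap.sum_apply, ContinuousLinearMap.smul_apply,
    ContinuousLinearMap.proj_apply, smul_eq_mul]
  exact Finset.sum_congr rfl fun a _ => mul_comm _ _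

lemma lin_norm_le {d : ℕ} (t : Fin d → ℝ) : ‖lin t‖ ≤ ∑ a, |t a| := by
  refine (norm_sum_le _ _).trans (Finset.sum_le_sum fun a _ => ?_)
  rw [norm_smul (t a) (ContinuousLinearMap.proj a : (Fin d → ℝ) →L[ℝ] ℝ), Real.norm_eq_abs]
  have : ‖(ContinuousLinearMap.proj a : (Fin d → ℝ) →L[ℝ] ℝ)‖ ≤ 1 :=
    ContinuousLinearMap.opNorm_le_bound _ zero_le_one fun v => by
      simpa using norm_le_pi_norm v a
  calc |t a| * ‖(ContinuousLinearMap.proj a : (Fin d → ℝ) →L[ℝ] ℝ)‖ ≤ |t a| * 1 :=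
        mul_le_mul_of_nonneg_left this (abs_nonneg _)
    _ = |t a| := mul_one _

lemma lin_single {d : ℕ} (t : Fin d → ℝ) (j : Fin d) : lin t (Pi.single j 1) = t j := by
  rw [lin_apply]
  simp [Pi.single_apply]

lemma lin_cont {d : ℕ} : Continuous (lin (d := d)) :=
  continuous_finset_sum _ fun a _ => (continuous_apply a).smul continuous_const

lemma hasFDerivAt_sum_mul {d : ℕ} (t y₀ : Fin d → ℝ) :
    HasFDerivAt (fun y' : Fin d → ℝ => ∑ a, y' a * t a) (lin t) y₀ := by
  have : (fun y' : Fin d → ℝ => ∑ a, y' a * t a) = lin t := funext fun v => (lin_apply t v).symm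
  rw [this]
  exact (lin t).hasFDerivAt

section main
variable {d : ℕ} (x : Matrix (Fin d) (Fin d) ℝ) (c : ℝ) (hc : 0 < c)
  (hQ : ∀ t : Fin d → ℝ, ∑ a, ∑ b, x a b * t a * t b ≤ -(c * ∑ k, t k ^ 2))
  (S : Set (Fin d → ℝ))

lemma cont_integrand (p : Fin d → ℕ) (y' : Fin d → ℝ) :
    Continuous (fun t : Fin d → ℝ =>
      (∏ k, t k ^ p k) * Real.exp (∑ a, ∑ b, x a b * t a * t b + ∑ a, y' a * t a)) := by
  fun_prop

include hc hQ in
lemma int_main (p : Fin d → ℕ) (y' : Fin d → ℝ) :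
    Integrable (fun t : Fin d → ℝ =>
        (∏ k, t k ^ p k) * Real.exp (∑ a, ∑ b, x a b * t a * t b + ∑ a, y' a * t a))
      (volume.restrict S) := by
  refine Integrable.mono ((aux_master d p y' 0 c hc).restrict (s := S))
    ((cont_integrand x p y').aestronglyMeasurable.restrict) ?_
  refine Filter.Eventually.of_forall fun t => ?_
  simp only [Real.norm_eq_abs, abs_mul, abs_exp]
  have h1 : |∏ k, t k ^ p k| = ∏ k, |t k| ^ p k := by
    rw [Finset.abs_prod]
    exact Finset.prod_congr rfl fun k _ => abs_pow _ _
  have h2 : Real.exp (∑ a, ∑ b, x a b * t a * t b + ∑ a, y' a * t a)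
      ≤ Real.exp (∑ k, (y' k * t k + 0 * |t k| - c * t k ^ 2)) := by
    apply Real.exp_le_exp.2
    have h3 : ∑ k, (y' k * t k + 0 * |t k| - c * t k ^ 2)
        = ∑ k, y' k * t k - c * ∑ k, t k ^ 2 := by
      rw [Finset.sum_sub_distrib, ← Finset.mul_sum]
      simp
    rw [h3]
    have := hQ t
    linarith
  rw [h1, abs_of_nonneg (by positivity)]
  exact mul_le_mul_of_nonneg_left h2 (by positivity)

include hc hQ in
lemma intF' (p : Fin d → ℕ) (y' : Fin d → ℝ) :
    Integrable (fun t : Fin d → ℝ => ((∏ k, t k ^ p k) *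
      Real.exp (∑ a, ∑ b, x a b * t a * t b + ∑ a, y' a * t a)) • lin t)
      (volume.restrict S) := by
  have hpm : ∀ (t : Fin d → ℝ) (m : Fin d),
      (∏ k, |t k| ^ (p k + if k = m then 1 else 0)) = (∏ k, |t k| ^ p k) * |t m| := by
    intro t m
    simp only [pow_add, Finset.prod_mul_distrib]
    congr 1
    rw [show (fun k => |t k| ^ (if k = m then 1 else 0)) = fun k => if k = m then |t k| else 1 from
      funext fun k => by split <;> simp]
    simp
  refine Integrable.mono
    (g := fun t => ∑ m, (∏ k, |t k| ^ (p k + if k = m then 1 else 0)) *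
      Real.exp (∑ k, (y' k * t k + 0 * |t k| - c * t k ^ 2)))
    (integrable_finset_sum _ fun m _ =>
      (aux_master d (fun k => p k + if k = m then 1 else 0) y' 0 c hc).restrict)
    (((cont_integrand x p y').smul lin_cont).aestronglyMeasurable.restrict) ?_
  refine Filter.Eventually.of_forall fun t => ?_
  rw [norm_smul _ (lin t), Real.norm_eq_abs, abs_mul, abs_exp]
  have h1 : |∏ k, t k ^ p k| = ∏ k, |t k| ^ p k := by
    rw [Finset.abs_prod]; exact Finset.prod_congr rfl fun k _ => abs_pow _ _
  have h2 : Real.exp (∑ a, ∑ b, x a b * t a * t b + ∑ a, y' a * t a)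
      ≤ Real.exp (∑ k, (y' k * t k + 0 * |t k| - c * t k ^ 2)) := by
    apply Real.exp_le_exp.2
    have h3 : ∑ k, (y' k * t k + 0 * |t k| - c * t k ^ 2)
        = ∑ k, y' k * t k - c * ∑ k, t k ^ 2 := by
      rw [Finset.sum_sub_distrib, ← Finset.mul_sum]; simp
    rw [h3]
    have := hQ t
    linarith
  have hb : 0 ≤ ∑ m, (∏ k, |t k| ^ (p k + if k = m then 1 else 0)) *
      Real.exp (∑ k, (y' k * t k + 0 * |t k| - c * t k ^ 2)) := by
    refine Finset.sum_nonneg fun m _ => by positivity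
  rw [Real.norm_eq_abs, abs_of_nonneg hb]
  calc |∏ k, t k ^ p k| * Real.exp (∑ a, ∑ b, x a b * t a * t b + ∑ a, y' a * t a) * ‖lin t‖
      ≤ (∏ k, |t k| ^ p k) * Real.exp (∑ k, (y' k * t k + 0 * |t k| - c * t k ^ 2))
          * ∑ a, |t a| := by
        rw [h1]
        refine mul_le_mul (mul_le_mul_of_nonneg_left h2 (by positivity)) (lin_norm_le t)
          (norm_nonneg _) (by positivity)
    _ = ∑ m, (∏ k, |t k| ^ (p k + if k = m then 1 else 0)) *
          Real.exp (∑ k, (y' k * t k + 0 * |t k| - c * t k ^ 2)) := by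
        rw [Finset.mul_sum]
        refine Finset.sum_congr rfl fun m _ => ?_
        rw [hpm t m]
        ring

include hc hQ in
lemma stepA (p : Fin d → ℕ) (y₀ : Fin d → ℝ) :
    HasFDerivAt (fun y' => ∫ t in S,
        (∏ k, t k ^ p k) * Real.exp (∑ a, ∑ b, x a b * t a * t b + ∑ a, y' a * t a))
      (∫ t in S, ((∏ k, t k ^ p k) *
        Real.exp (∑ a, ∑ b, x a b * t a * t b + ∑ a, y₀ a * t a)) • lin t) y₀ := by
  have hpm : ∀ (t : Fin d → ℝ) (m : Fin d),
      (∏ k, |t k| ^ (p k + if k = m then 1 else 0)) = (∏ k, |t k| ^ p k) * |t m| := by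
    intro t m
    simp only [pow_add, Finset.prod_mul_distrib]
    congr 1
    rw [show (fun k => |t k| ^ (if k = m then 1 else 0)) = fun k => if k = m then |t k| else 1 from
      funext fun k => by split <;> simp]
    simp
  apply hasFDerivAt_integral_of_dominated_of_fderiv_le (s := ball y₀ 1)
    (F' := fun y' t => ((∏ k, t k ^ p k) *
      Real.exp (∑ a, ∑ b, x a b * t a * t b + ∑ a, y' a * t a)) • lin t)
    (bound := fun t => ∑ m, (∏ k, |t k| ^ (p k + if k = m then 1 else 0)) *
      Real.exp (∑ k, (y₀ k * t k + 1 * |t k| - c * t k ^ 2)))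
    (ball_mem_nhds y₀ one_pos)
  · exact Filter.Eventually.of_forall fun y' =>
      ((cont_integrand x p y').aestronglyMeasurable.restrict)
  · exact int_main x c hc hQ S p y₀
  · exact ((((cont_integrand x p y₀)).smul lin_cont).aestronglyMeasurable.restrict)
  · refine Filter.Eventually.of_forall fun t => fun y' hy' => ?_
    rw [norm_smul _ (lin t), Real.norm_eq_abs, abs_mul, abs_exp]
    have h1 : |∏ k, t k ^ p k| = ∏ k, |t k| ^ p k := by
      rw [Finset.abs_prod]; exact Finset.prod_congr rfl fun k _ => abs_pow _ _
    have h2 : Real.exp (∑ a, ∑ b, x a b * t a * t b + ∑ a, y' a * t a)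
        ≤ Real.exp (∑ k, (y₀ k * t k + 1 * |t k| - c * t k ^ 2)) := by
      apply Real.exp_le_exp.2
      have h3 : ∀ a, y' a * t a ≤ y₀ a * t a + |t a| := by
        intro a
        have hd : |y' a - y₀ a| ≤ 1 := by
          have h6 := dist_le_pi_dist y' y₀ a
          rw [Metric.mem_ball] at hy'
          rw [Real.dist_eq] at h6
          linarith
        have h7 : (y' a - y₀ a) * t a ≤ |t a| := by
          calc (y' a - y₀ a) * t a ≤ |(y' a - y₀ a) * t a| := le_abs_self _
            _ = |y' a - y₀ a| * |t a| := abs_mul _ _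
            _ ≤ 1 * |t a| := mul_le_mul_of_nonneg_right hd (abs_nonneg _)
            _ = |t a| := one_mul _
        nlinarith [h7]
      have h4 : ∑ k, (y₀ k * t k + 1 * |t k| - c * t k ^ 2)
          = (∑ k, (y₀ k * t k + |t k|)) - c * ∑ k, t k ^ 2 := by
        rw [Finset.sum_sub_distrib, ← Finset.mul_sum]
        simp
      rw [h4]
      have h5 : ∑ a, y' a * t a ≤ ∑ k, (y₀ k * t k + |t k|) := by
        refine Finset.sum_le_sum fun a _ => ?_
        have := h3 a
        simpa using this
      have := hQ t
      linarith
    calc |∏ k, t k ^ p k| * Real.exp (∑ a, ∑ b, x a b * t a * t b + ∑ a, y' a * t a) * ‖lin t‖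
        ≤ (∏ k, |t k| ^ p k) * Real.exp (∑ k, (y₀ k * t k + 1 * |t k| - c * t k ^ 2))
            * ∑ a, |t a| := by
          rw [h1]
          refine mul_le_mul (mul_le_mul_of_nonneg_left h2 (by positivity)) (lin_norm_le t)
            (norm_nonneg _) (by positivity)
      _ = ∑ m, (∏ k, |t k| ^ (p k + if k = m then 1 else 0)) *
            Real.exp (∑ k, (y₀ k * t k + 1 * |t k| - c * t k ^ 2)) := by
          rw [Finset.mul_sum]
          refine Finset.sum_congr rfl fun m _ => ?_
          rw [hpm t m]
          ring
  · refine integrable_finset_sum _ fun m _ => ?_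
    exact (aux_master d (fun k => p k + if k = m then 1 else 0) y₀ 1 c hc).restrict
  · refine Filter.Eventually.of_forall fun t => fun y' _ => ?_
    have h1 := hasFDerivAt_sum_mul t y'
    have h2 := (h1.const_add (∑ a, ∑ b, x a b * t a * t b)).exp
    have h3 := h2.const_mul (∏ k, t k ^ p k)
    rw [mul_smul]
    exact h3

include hc hQ in
lemma stepS (E : Matrix (Fin d) (Fin d) ℝ)
    (hE : ∀ t : Fin d → ℝ, |∑ a, ∑ b, E a b * t a * t b| ≤ 2 * ∑ k, t k ^ 2)
    (y : Fin d → ℝ) :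
    HasDerivAt (fun s : ℝ => ∫ t in S,
        Real.exp (∑ a, ∑ b, (x + s • E) a b * t a * t b + ∑ a, y a * t a))
      (∫ t in S, (∑ a, ∑ b, E a b * t a * t b) *
        Real.exp (∑ a, ∑ b, x a b * t a * t b + ∑ a, y a * t a)) 0 := by
  have hsplit : ∀ (s : ℝ) (t : Fin d → ℝ),
      ∑ a, ∑ b, (x + s • E) a b * t a * t b
        = ∑ a, ∑ b, x a b * t a * t b + s * ∑ a, ∑ b, E a b * t a * t b := by
    intro s t
    simp only [Matrix.add_apply, Matrix.smul_apply, smul_eq_mul, Finset.mul_sum]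
    rw [← Finset.sum_add_distrib]
    refine Finset.sum_congr rfl fun a _ => ?_
    rw [← Finset.sum_add_distrib]
    exact Finset.sum_congr rfl fun b _ => by ring
  simp_rw [hsplit]
  have hcont : ∀ s : ℝ, Continuous (fun t : Fin d → ℝ =>
      Real.exp (∑ a, ∑ b, x a b * t a * t b + s * ∑ a, ∑ b, E a b * t a * t b
        + ∑ a, y a * t a)) := by
    intro s; fun_prop
  have hc2 : (0:ℝ) < c / 2 := by linarith
  have key := hasDerivAt_integral_of_dominated_loc_of_deriv_le (μ := volume.restrict S)
    (F := fun s t => Real.exp (∑ a, ∑ b, x a b * t a * t b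
      + s * ∑ a, ∑ b, E a b * t a * t b + ∑ a, y a * t a))
    (F' := fun s t => (∑ a, ∑ b, E a b * t a * t b) *
      Real.exp (∑ a, ∑ b, x a b * t a * t b
        + s * ∑ a, ∑ b, E a b * t a * t b + ∑ a, y a * t a))
    (x₀ := 0) (s := ball 0 (c / 4))
    (bound := fun t => ∑ m, 2 * ((∏ k, |t k| ^ (if k = m then 2 else 0)) *
      Real.exp (∑ k, (y k * t k + 0 * |t k| - c / 2 * t k ^ 2))))
    (ball_mem_nhds _ (by linarith))
    (Filter.Eventually.of_forall fun s => (hcont s).aestronglyMeasurable.restrict)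
    ?_ ?_ ?_ ?_ ?_
  · have h0 : (∫ t in S, (∑ a, ∑ b, E a b * t a * t b) *
        Real.exp (∑ a, ∑ b, x a b * t a * t b
          + (0:ℝ) * ∑ a, ∑ b, E a b * t a * t b + ∑ a, y a * t a))
        = ∫ t in S, (∑ a, ∑ b, E a b * t a * t b) *
          Real.exp (∑ a, ∑ b, x a b * t a * t b + ∑ a, y a * t a) := by
      norm_num
    rw [h0] at key
    exact key.2
  -- integrability of F 0
  · have hmas := (aux_master d (fun _ => 0) y 0 c hc).restrict (s := S)
    refine Integrable.mono hmas ((hcont 0).aestronglyMeasurable.restrict) ?_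
    refine Filter.Eventually.of_forall fun t => ?_
    simp only [Real.norm_eq_abs, abs_exp, pow_zero, Finset.prod_const_one, one_mul]
    apply Real.exp_le_exp.2
    have h3 : ∑ k, (y k * t k + 0 * |t k| - c * t k ^ 2)
        = ∑ k, y k * t k - c * ∑ k, t k ^ 2 := by
      rw [Finset.sum_sub_distrib, ← Finset.mul_sum]; simp
    rw [h3]
    have := hQ t
    linarith
  -- measurability of F' 0
  · have : Continuous (fun t : Fin d → ℝ => (∑ a, ∑ b, E a b * t a * t b) *
        Real.exp (∑ a, ∑ b, x a b * t a * t b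
          + (0:ℝ) * ∑ a, ∑ b, E a b * t a * t b + ∑ a, y a * t a)) := by fun_prop
    exact this.aestronglyMeasurable.restrict
  -- bound
  · refine Filter.Eventually.of_forall fun t s hs => ?_
    rw [Real.norm_eq_abs, abs_mul, abs_exp]
    have hq := hE t
    have hsum : (0:ℝ) ≤ ∑ k, t k ^ 2 := Finset.sum_nonneg fun k _ => sq_nonneg _
    have hs4 : |s| < c / 4 := by
      rw [Metric.mem_ball, Real.dist_eq, sub_zero] at hs; exact hs
    have hexp : Real.exp (∑ a, ∑ b, x a b * t a * t b
          + s * ∑ a, ∑ b, E a b * t a * t b + ∑ a, y a * t a)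
        ≤ Real.exp (∑ k, (y k * t k + 0 * |t k| - c / 2 * t k ^ 2)) := by
      apply Real.exp_le_exp.2
      have h3 : ∑ k, (y k * t k + 0 * |t k| - c / 2 * t k ^ 2)
          = ∑ k, y k * t k - c / 2 * ∑ k, t k ^ 2 := by
        rw [Finset.sum_sub_distrib, ← Finset.mul_sum]; simp
      rw [h3]
      have h5 : s * ∑ a, ∑ b, E a b * t a * t b ≤ c / 2 * ∑ k, t k ^ 2 := by
        calc s * ∑ a, ∑ b, E a b * t a * t b
            ≤ |s * ∑ a, ∑ b, E a b * t a * t b| := le_abs_self _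
          _ = |s| * |∑ a, ∑ b, E a b * t a * t b| := abs_mul _ _
          _ ≤ (c / 4) * (2 * ∑ k, t k ^ 2) := by
              exact mul_le_mul hs4.le hq (abs_nonneg _) (by linarith)
          _ = c / 2 * ∑ k, t k ^ 2 := by ring
      have := hQ t
      linarith
    have hsq : ∀ m : Fin d, (∏ k, |t k| ^ (if k = m then 2 else 0)) = t m ^ 2 := by
      intro m
      rw [show (fun k => |t k| ^ (if k = m then 2 else 0))
          = fun k => if k = m then t k ^ 2 else 1 from
        funext fun k => by split <;> simp [sq_abs]]
      simp
    calc |∑ a, ∑ b, E a b * t a * t b| *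
          Real.exp (∑ a, ∑ b, x a b * t a * t b
            + s * ∑ a, ∑ b, E a b * t a * t b + ∑ a, y a * t a)
        ≤ (2 * ∑ k, t k ^ 2) * Real.exp (∑ k, (y k * t k + 0 * |t k| - c / 2 * t k ^ 2)) := by
          exact mul_le_mul hq hexp (Real.exp_pos _).le (by linarith)
      _ = ∑ m, 2 * ((∏ k, |t k| ^ (if k = m then 2 else 0)) *
            Real.exp (∑ k, (y k * t k + 0 * |t k| - c / 2 * t k ^ 2))) := by
          rw [Finset.mul_sum, Finset.sum_mul]
          exact Finset.sum_congr rfl fun m _ => by rw [hsq m]; ring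
  -- bound integrable
  · refine integrable_finset_sum _ fun m _ => ?_
    exact ((aux_master d (fun k => if k = m then 2 else 0) y 0 (c / 2) hc2).restrict).const_mul 2
  -- differentiability
  · refine Filter.Eventually.of_forall fun t s _ => ?_
    have h1 : HasDerivAt (fun s : ℝ => ∑ a, ∑ b, x a b * t a * t b
        + s * ∑ a, ∑ b, E a b * t a * t b + ∑ a, y a * t a)
        (∑ a, ∑ b, E a b * t a * t b) s := by
      simpa using (((hasDerivAt_mul_const (∑ a, ∑ b, E a b * t a * t b)).const_add
        (∑ a, ∑ b, x a b * t a * t b)).add_const (∑ a, y a * t a))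
    have h2 := h1.exp
    simpa [mul_comm] using h2


end main


/-- For −x symmetric positive definite and y ∈ ℝ^d, with
g(x,y) = ∫_{[0,∞)^d} exp(tᵀxt + yᵀt) dt viewed as a function of the independent
entries x_{ij} (i ≤ j) of x and of y: ∂g/∂x_{ij} = 2 ∂²g/∂y_i∂y_j for i < j, and
∂g/∂x_{ii} = ∂²g/∂y_i². (The partial derivative in the independent variable x_{ij},
i < j, is the derivative along the symmetric perturbation E_{ij} + E_{ji}.) -/
theorem orthant_integral_x_derivatives (d : ℕ) (x : Matrix (Fin d) (Fin d) ℝ)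
    (hx : (-x).PosDef) (y : Fin d → ℝ) :
    let G : Matrix (Fin d) (Fin d) ℝ → (Fin d → ℝ) → ℝ := fun x' y' =>
      ∫ t in {t : Fin d → ℝ | ∀ k, 0 ≤ t k},
        Real.exp (∑ a, ∑ b, x' a b * t a * t b + ∑ a, y' a * t a)
    (∀ i j : Fin d, i < j →
      deriv (fun s : ℝ =>
          G (x + s • (Matrix.single i j (1:ℝ)
            + Matrix.single j i (1:ℝ))) y) 0
        = 2 * fderiv ℝ (fun y' => fderiv ℝ (G x) y' (Pi.single j 1)) y
            (Pi.single i 1)) ∧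
    (∀ i : Fin d,
      deriv (fun s : ℝ => G (x + s • Matrix.single i i (1:ℝ)) y) 0
        = fderiv ℝ (fun y' => fderiv ℝ (G x) y' (Pi.single i 1)) y
            (Pi.single i 1)) := by
  intro G
  obtain ⟨c, hc, hQ⟩ := aux_coercive hx
  set S : Set (Fin d → ℝ) := {t : Fin d → ℝ | ∀ k, 0 ≤ t k} with hSdef
  have hA : ∀ y₀ : Fin d → ℝ, HasFDerivAt (G x)
      (∫ t in S, (Real.exp (∑ a, ∑ b, x a b * t a * t b + ∑ a, y₀ a * t a)) • lin t) y₀ := by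
    intro y₀
    have h := stepA x c hc hQ S (fun _ => 0) y₀
    simp only [pow_zero, Finset.prod_const_one, one_mul] at h
    exact h
  have hprod : ∀ (j : Fin d) (t : Fin d → ℝ),
      (∏ k, t k ^ (if k = j then 1 else 0)) = t j := by
    intro j t
    rw [show (fun k => t k ^ (if k = j then 1 else 0)) = fun k => if k = j then t k else 1 from
      funext fun k => by split <;> simp]
    simp
  have hfun : ∀ j : Fin d, (fun y' => fderiv ℝ (G x) y' (Pi.single j 1))
      = fun y' => ∫ t in S,
          t j * Real.exp (∑ a, ∑ b, x a b * t a * t b + ∑ a, y' a * t a) := by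
    intro j
    funext y'
    rw [(hA y').fderiv, ContinuousLinearMap.integral_apply
      (by simpa using intF' x c hc hQ S (fun _ => 0) y')]
    refine integral_congr_ae (Filter.Eventually.of_forall fun t => ?_)
    simp only [ContinuousLinearMap.smul_apply, lin_single, smul_eq_mul]
    ring
  have hB : ∀ j : Fin d, HasFDerivAt
      (fun y' => ∫ t in S,
        t j * Real.exp (∑ a, ∑ b, x a b * t a * t b + ∑ a, y' a * t a))
      (∫ t in S, (t j * Real.exp (∑ a, ∑ b, x a b * t a * t b + ∑ a, y a * t a)) • lin t) y := by
    intro j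
    have h := stepA x c hc hQ S (fun k => if k = j then 1 else 0) y
    simp only [hprod j] at h
    exact h
  have hsecond : ∀ i j : Fin d,
      fderiv ℝ (fun y' => fderiv ℝ (G x) y' (Pi.single j 1)) y (Pi.single i 1)
        = ∫ t in S,
            (t j * Real.exp (∑ a, ∑ b, x a b * t a * t b + ∑ a, y a * t a)) * t i := by
    intro i j
    have hint : Integrable (fun t : Fin d → ℝ =>
        (t j * Real.exp (∑ a, ∑ b, x a b * t a * t b + ∑ a, y a * t a)) • lin t)
        (volume.restrict S) := by
      have := intF' x c hc hQ S (fun k => if k = j then 1 else 0) y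
      simpa only [hprod j] using this
    rw [hfun j, (hB j).fderiv, ContinuousLinearMap.integral_apply hint]
    refine integral_congr_ae (Filter.Eventually.of_forall fun t => ?_)
    simp only [ContinuousLinearMap.smul_apply, lin_single, smul_eq_mul]
  constructor
  · intro i j hij
    set E : Matrix (Fin d) (Fin d) ℝ :=
      Matrix.single i j (1:ℝ) + Matrix.single j i (1:ℝ) with hEdef
    have hEq : ∀ t : Fin d → ℝ,
        ∑ a, ∑ b, E a b * t a * t b = t i * t j + t j * t i := by
      intro t
      simp [hEdef, Matrix.single, Matrix.add_apply, Matrix.of_apply, ite_and, add_mul,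
        Finset.sum_add_distrib, Finset.sum_ite_eq, Finset.mul_sum]
    have hEb : ∀ t : Fin d → ℝ, |∑ a, ∑ b, E a b * t a * t b| ≤ 2 * ∑ k, t k ^ 2 := by
      intro t
      rw [hEq t]
      have h1 : t i ^ 2 + t j ^ 2 ≤ ∑ k, t k ^ 2 := by
        have := Finset.sum_le_sum_of_subset_of_nonneg
          (Finset.subset_univ {i, j}) (fun k _ _ => sq_nonneg (t k))
        rwa [Finset.sum_pair hij.ne] at this
      have h2 : |t i * t j + t j * t i| = 2 * |t i * t j| := by
        rw [show t i * t j + t j * t i = 2 * (t i * t j) by ring, abs_mul]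
        norm_num
      rw [h2, abs_mul]
      nlinarith [sq_nonneg (|t i| - |t j|), sq_abs (t i), sq_abs (t j),
        abs_nonneg (t i), abs_nonneg (t j)]
    have hd := (stepS x c hc hQ S E hEb y).deriv
    rw [hsecond i j]
    have h0 : (fun s : ℝ => G (x + s • E) y) = fun s : ℝ => ∫ t in S,
        Real.exp (∑ a, ∑ b, (x + s • E) a b * t a * t b + ∑ a, y a * t a) := rfl
    rw [h0, hd]
    rw [show (∫ t in S, (∑ a, ∑ b, E a b * t a * t b) *
          Real.exp (∑ a, ∑ b, x a b * t a * t b + ∑ a, y a * t a))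
        = ∫ t in S, 2 * ((t j * Real.exp (∑ a, ∑ b, x a b * t a * t b + ∑ a, y a * t a)) * t i)
      from integral_congr_ae (Filter.Eventually.of_forall fun t => by simp only [hEq]; ring)]
    rw [MeasureTheory.integral_const_mul]
  · intro i
    set E : Matrix (Fin d) (Fin d) ℝ := Matrix.single i i (1:ℝ) with hEdef
    have hEq : ∀ t : Fin d → ℝ, ∑ a, ∑ b, E a b * t a * t b = t i * t i := by
      intro t
      simp [hEdef, Matrix.single, Matrix.of_apply, ite_and, Finset.sum_ite_eq]
    have hEb : ∀ t : Fin d → ℝ, |∑ a, ∑ b, E a b * t a * t b| ≤ 2 * ∑ k, t k ^ 2 := by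
      intro t
      rw [hEq t]
      have h1 : t i ^ 2 ≤ ∑ k, t k ^ 2 :=
        Finset.single_le_sum (f := fun k => t k ^ 2) (fun k _ => sq_nonneg (t k))
          (Finset.mem_univ i)
      rw [abs_of_nonneg (mul_self_nonneg (t i))]
      have hs : (0:ℝ) ≤ ∑ k, t k ^ 2 := Finset.sum_nonneg fun k _ => sq_nonneg _
      nlinarith []
    have hd := (stepS x c hc hQ S E hEb y).deriv
    rw [hsecond i i]
    have h0 : (fun s : ℝ => G (x + s • E) y) = fun s : ℝ => ∫ t in S,
        Real.exp (∑ a, ∑ b, (x + s • E) a b * t a * t b + ∑ a, y a * t a) := rfl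
    rw [h0, hd]
    refine integral_congr_ae (Filter.Eventually.of_forall fun t => ?_)
    simp only [hEq]
    ring
end

section
/- With notation as in Lemma 3.3, for J ⊆ {1,…,d}: if {i,j} ⊆ J with i < j then ∂g_J/∂x_{ij} = 2 ∂²g_J/∂y_i∂y_j; if i ∈ J then ∂g_J/∂x_{ii} = ∂²g_J/∂y_i²; and if {i,j} ⊄ J then ∂g_J/∂x_{ij} = 0. -/
open MeasureTheory Real Matrix


set_option maxHeartbeats 1000000
set_option linter.unusedSectionVars false

open MeasureTheory Real Matrix Filter


lemma aux_bounded (k : ℕ) (B c : ℝ) (hc : 0 < c) (r : ℝ) (hr : 0 ≤ r) :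
    r ^ k * Real.exp (B * r - c * r ^ 2) ≤ k.factorial * Real.exp ((B + 1) ^ 2 / (4 * c)) := by
  have h1 : r ^ k ≤ k.factorial * Real.exp r := by
    have := Real.sum_le_exp_of_nonneg hr (k + 1)
    have h2 : r ^ k / k.factorial ≤ ∑ i ∈ Finset.range (k + 1), r ^ i / i.factorial := by
      refine Finset.single_le_sum (f := fun i => r ^ i / i.factorial) (fun i _ => by positivity) ?_
      simp
    have h3 : r ^ k / k.factorial ≤ Real.exp r := le_trans h2 this
    have hk : (0:ℝ) < k.factorial := by positivity
    calc r ^ k = (r ^ k / k.factorial) * k.factorial := by field_simp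
    _ ≤ Real.exp r * k.factorial := by
        exact mul_le_mul_of_nonneg_right h3 hk.le
    _ = k.factorial * Real.exp r := by ring
  calc r ^ k * Real.exp (B * r - c * r ^ 2)
      ≤ (k.factorial * Real.exp r) * Real.exp (B * r - c * r ^ 2) :=
        mul_le_mul_of_nonneg_right h1 (Real.exp_nonneg _)
    _ = k.factorial * Real.exp ((B + 1) * r - c * r ^ 2) := by
        rw [mul_assoc, ← Real.exp_add]; ring_nf
    _ ≤ k.factorial * Real.exp ((B + 1) ^ 2 / (4 * c)) := by
        refine mul_le_mul_of_nonneg_left (Real.exp_le_exp.2 ?_) (by positivity)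
        rw [le_div_iff₀ (by positivity : (0:ℝ) < 4 * c)]
        nlinarith [sq_nonneg ((B + 1) - 2 * c * r), hc.le]

lemma aux_integrable {ι : Type*} [Fintype ι] (k : ℕ) (B c : ℝ) (hc : 0 < c) :
    Integrable (fun t : ι → ℝ =>
      (∑ i, |t i|) ^ k * Real.exp (B * (∑ i, |t i|) - c * ∑ i, t i ^ 2)) := by
  set M : ℝ := k.factorial * Real.exp ((B + 1) ^ 2 / (4 * (c / (2 * (Fintype.card ι + 1)))))
  have hM : 0 ≤ M := by positivity
  have hint : Integrable (fun t : ι → ℝ => M * ∏ i, Real.exp (-(c / 2) * t i ^ 2)) := by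
    refine (Integrable.fintype_prod (f := fun (_ : ι) (r : ℝ) => Real.exp (-(c/2) * r ^ 2))
      (fun i => ?_)).const_mul M
    exact integrable_exp_neg_mul_sq (by positivity)
  refine hint.mono' ?_ (ae_of_all _ fun t => ?_)
  · exact Continuous.aestronglyMeasurable (by continuity)
  · have hρ : 0 ≤ ∑ i, |t i| := Finset.sum_nonneg fun i _ => abs_nonneg _
    have hq : 0 ≤ ∑ i, t i ^ 2 := Finset.sum_nonneg fun i _ => sq_nonneg _
    have hcs : (∑ i, |t i|) ^ 2 ≤ Fintype.card ι * ∑ i, t i ^ 2 := by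
      have := sq_sum_le_card_mul_sum_sq (s := (Finset.univ : Finset ι)) (f := fun i => |t i|)
      simpa [sq_abs] using this
    have hcs' : (∑ i, |t i|) ^ 2 ≤ (Fintype.card ι + 1) * ∑ i, t i ^ 2 := by nlinarith
    have key : (∑ i, |t i|) ^ k * Real.exp (B * (∑ i, |t i|) - (c/2) * ∑ i, t i ^ 2) ≤ M := by
      have hle : B * (∑ i, |t i|) - (c/2) * ∑ i, t i ^ 2
          ≤ B * (∑ i, |t i|) - (c / (2 * (Fintype.card ι + 1))) * (∑ i, |t i|) ^ 2 := by
        have : (c / (2 * (Fintype.card ι + 1))) * (∑ i, |t i|) ^ 2 ≤ (c/2) * ∑ i, t i ^ 2 := by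
          rw [div_mul_eq_mul_div, div_le_iff₀ (by positivity)]
          calc c * (∑ i, |t i|) ^ 2 ≤ c * ((Fintype.card ι + 1) * ∑ i, t i ^ 2) :=
            mul_le_mul_of_nonneg_left hcs' hc.le
          _ = c / 2 * (∑ i, t i ^ 2) * (2 * (Fintype.card ι + 1)) := by ring
        linarith
      calc (∑ i, |t i|) ^ k * Real.exp (B * (∑ i, |t i|) - (c/2) * ∑ i, t i ^ 2)
          ≤ (∑ i, |t i|) ^ k * Real.exp (B * (∑ i, |t i|)
              - (c / (2 * (Fintype.card ι + 1))) * (∑ i, |t i|) ^ 2) := by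
            exact mul_le_mul_of_nonneg_left (Real.exp_le_exp.2 hle) (by positivity)
        _ ≤ M := aux_bounded k B _ (by positivity) _ hρ
    have hprod : ∏ i, Real.exp (-(c/2) * t i ^ 2) = Real.exp (-(c/2) * ∑ i, t i ^ 2) := by
      rw [← Real.exp_sum]; congr 1; rw [Finset.mul_sum]
    rw [Real.norm_eq_abs, abs_of_nonneg (by positivity), hprod]
    calc (∑ i, |t i|) ^ k * Real.exp (B * (∑ i, |t i|) - c * ∑ i, t i ^ 2)
        = ((∑ i, |t i|) ^ k * Real.exp (B * (∑ i, |t i|) - (c/2) * ∑ i, t i ^ 2))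
          * Real.exp (-(c/2) * ∑ i, t i ^ 2) := by
          rw [mul_assoc, ← Real.exp_add]; ring_nf
      _ ≤ M * Real.exp (-(c/2) * ∑ i, t i ^ 2) :=
          mul_le_mul_of_nonneg_right key (Real.exp_nonneg _)


lemma posdef_quadratic_le {ι : Type*} [Fintype ι] [DecidableEq ι] {M : Matrix ι ι ℝ}
    (hM : M.PosDef) :
    ∃ c > 0, ∀ t : ι → ℝ, c * ∑ i, t i ^ 2 ≤ t ⬝ᵥ M *ᵥ t := by
  rcases isEmpty_or_nonempty ι with h | h
  · exact ⟨1, one_pos, fun t => by simp [dotProduct]⟩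
  · set f : (ι → ℝ) → ℝ := fun t => t ⬝ᵥ M *ᵥ t with hf
    have hfc : Continuous f := by
      unfold f
      simp only [dotProduct, mulVec]
      exact continuous_finset_sum _ fun i _ => (continuous_apply i).mul
        (continuous_finset_sum _ fun j _ => (continuous_const.mul (continuous_apply j)))
    set K : Set (ι → ℝ) := {t | ∑ i, t i ^ 2 = 1} with hK
    have hKc : IsCompact K := by
      refine Metric.isCompact_of_isClosed_isBounded
        (isClosed_eq (by continuity) continuous_const) ?_
      refine (Metric.isBounded_closedBall (x := (0 : ι → ℝ)) (r := 1)).subset ?_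
      intro t ht
      simp only [Metric.mem_closedBall, dist_zero_right]
      rw [pi_norm_le_iff_of_nonneg zero_le_one]
      intro i
      have h1 : t i ^ 2 ≤ 1 := by
        have := Finset.single_le_sum (f := fun i => t i ^ 2) (fun i _ => sq_nonneg _)
          (Finset.mem_univ i)
        rw [ht] at this; exact this
      rw [Real.norm_eq_abs]
      exact (sq_le_one_iff_abs_le_one (t i)).1 h1
    have hKne : K.Nonempty := by
      obtain ⟨i₀⟩ := h
      refine ⟨Pi.single i₀ 1, ?_⟩
      simp only [hK, Set.mem_setOf_eq]
      rw [Finset.sum_eq_single i₀]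
      · simp
      · intro b _ hb; simp [Pi.single_apply, hb]
      · simp
    obtain ⟨u, huK, hmin⟩ := hKc.exists_isMinOn hKne hfc.continuousOn
    have hu0 : u ≠ 0 := by
      intro h0
      rw [hK, Set.mem_setOf_eq, h0] at huK
      simp at huK
    have hcpos : 0 < f u := by
      have := hM.dotProduct_mulVec_pos hu0
      simpa [hf] using this
    refine ⟨f u, hcpos, fun t => ?_⟩
    rcases eq_or_ne t 0 with rfl | ht0
    · simp [hf, dotProduct]
    · have hqsum : 0 < ∑ i, t i ^ 2 := by
        rcases (Finset.sum_nonneg fun i (_ : i ∈ Finset.univ) => sq_nonneg (t i)).lt_or_eq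
          with h' | h'
        · exact h'
        · exfalso
          apply ht0
          funext i
          have := (Finset.sum_eq_zero_iff_of_nonneg
            (fun i (_ : i ∈ Finset.univ) => sq_nonneg (t i))).1 h'.symm i (Finset.mem_univ i)
          exact pow_eq_zero_iff (two_ne_zero) |>.1 this
      set q : ℝ := Real.sqrt (∑ i, t i ^ 2) with hq
      have hq0 : 0 < q := Real.sqrt_pos.2 hqsum
      have hqsq : q ^ 2 = ∑ i, t i ^ 2 := Real.sq_sqrt hqsum.le
      have hmem : q⁻¹ • t ∈ K := by
        simp only [hK, Set.mem_setOf_eq, Pi.smul_apply, smul_eq_mul]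
        have : ∑ i, (q⁻¹ * t i) ^ 2 = q⁻¹ ^ 2 * ∑ i, t i ^ 2 := by
          rw [Finset.mul_sum]; exact Finset.sum_congr rfl fun i _ => by ring
        rw [this, ← hqsq]
        field_simp
      have hscale : f (q⁻¹ • t) = q⁻¹ ^ 2 * f t := by
        simp only [hf, smul_dotProduct, Matrix.mulVec_smul, dotProduct_smul, smul_eq_mul]
        ring
      have hmin' : f u ≤ f (q⁻¹ • t) := hmin hmem
      rw [hscale] at hmin'
      -- hmin' : f u ≤ q⁻¹ ^ 2 * f t
      have h2 : f u * q ^ 2 ≤ f t := by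
        rw [← hqsq] at *
        calc f u * q ^ 2 ≤ (q⁻¹ ^ 2 * f t) * q ^ 2 := by nlinarith [sq_nonneg q, hmin']
        _ = f t := by field_simp
      calc f u * ∑ i, t i ^ 2 = f u * q ^ 2 := by rw [hqsq]
      _ ≤ f t := h2


noncomputable section gJaux

variable {ι κ : Type*} [Fintype ι] [Fintype κ]

/-- quadratic form sum -/
def gJQ (A : Matrix ι ι ℝ) (t : ι → ℝ) : ℝ := ∑ i, ∑ j, A i j * t i * t j

/-- positive orthant -/
def gJS (ι : Type*) : Set (ι → ℝ) := {t | ∀ j, 0 ≤ t j}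

/-- the continuous linear map `v ↦ ∑ i, t i * v (e i)` -/
def gJL (e : ι → κ) (t : ι → ℝ) : (κ → ℝ) →L[ℝ] ℝ :=
  ∑ i, t i • ContinuousLinearMap.proj (R := ℝ) (φ := fun _ : κ => ℝ) (e i)

lemma gJL_apply (e : ι → κ) (t : ι → ℝ) (v : κ → ℝ) :
    gJL e t v = ∑ i, t i * v (e i) := by
  simp [gJL, ContinuousLinearMap.sum_apply]

lemma gJL_norm_le (e : ι → κ) (t : ι → ℝ) : ‖gJL e t‖ ≤ ∑ i, |t i| := by
  refine ContinuousLinearMap.opNorm_le_bound _ (Finset.sum_nonneg fun i _ => abs_nonneg _) ?_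
  intro v
  rw [gJL_apply]
  calc ‖∑ i, t i * v (e i)‖ ≤ ∑ i, ‖t i * v (e i)‖ := norm_sum_le _ _
    _ ≤ ∑ i, |t i| * ‖v‖ := by
        refine Finset.sum_le_sum fun i _ => ?_
        rw [norm_mul, Real.norm_eq_abs]
        exact mul_le_mul_of_nonneg_left (norm_le_pi_norm v (e i)) (abs_nonneg _)
    _ = (∑ i, |t i|) * ‖v‖ := by rw [Finset.sum_mul]

lemma gJL_continuous (e : ι → κ) : Continuous fun t : ι → ℝ => gJL e t := by
  unfold gJL
  exact continuous_finset_sum _ fun i _ => (continuous_apply i).smul continuous_const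

lemma gJQ_continuous (A : Matrix ι ι ℝ) : Continuous (gJQ A) := by
  unfold gJQ
  exact continuous_finset_sum _ fun i _ => continuous_finset_sum _ fun j _ =>
    (continuous_const.mul (continuous_apply i)).mul (continuous_apply j)

end gJaux

section gJderiv
set_option linter.unusedSectionVars false

variable {ι κ : Type*} [Fintype ι] [Fintype κ]

lemma aux_integrable' (k : ℕ) (B c : ℝ) (hc : 0 < c) :
    Integrable (fun t : ι → ℝ =>
      (∑ i, |t i|) ^ k * Real.exp (B * (∑ i, |t i|) - c * ∑ i, t i ^ 2)) :=
  aux_integrable k B c hc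

lemma gJ_exponent_le {A : Matrix ι ι ℝ} {c : ℝ}
    (hQ : ∀ t : ι → ℝ, gJQ A t ≤ -c * ∑ i, t i ^ 2) {Y : ℝ} {b : ι → ℝ}
    (hb : ∀ i, |b i| ≤ Y) (t : ι → ℝ) :
    gJQ A t + ∑ i, b i * t i ≤ Y * (∑ i, |t i|) - c * ∑ i, t i ^ 2 := by
  have h1 : ∑ i, b i * t i ≤ Y * ∑ i, |t i| := by
    rw [Finset.mul_sum]
    refine Finset.sum_le_sum fun i _ => ?_
    calc b i * t i ≤ |b i * t i| := le_abs_self _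
      _ = |b i| * |t i| := abs_mul _ _
      _ ≤ Y * |t i| := mul_le_mul_of_nonneg_right (hb i) (abs_nonneg _)
  linarith [hQ t]

lemma gJ_integrable_scalar {A : Matrix ι ι ℝ} {c : ℝ} (hc : 0 < c)
    (hQ : ∀ t : ι → ℝ, gJQ A t ≤ -c * ∑ i, t i ^ 2)
    {w : (ι → ℝ) → ℝ} (hwc : Continuous w) {k : ℕ} (hw : ∀ t, |w t| ≤ (∑ i, |t i|) ^ k)
    {Y : ℝ} {b : ι → ℝ} (hb : ∀ i, |b i| ≤ Y) :
    Integrable (fun t : ι → ℝ => w t * Real.exp (gJQ A t + ∑ i, b i * t i))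
      (volume.restrict (gJS ι)) := by
  refine ((aux_integrable' k Y c hc).restrict (s := gJS ι)).mono' ?_ (ae_of_all _ fun t => ?_)
  · exact Continuous.aestronglyMeasurable (by
      exact hwc.mul ((gJQ_continuous A).add (continuous_finset_sum _ fun i _ =>
        continuous_const.mul (continuous_apply i))).rexp)
  · rw [Real.norm_eq_abs, abs_mul, abs_of_nonneg (Real.exp_nonneg _)]
    calc |w t| * Real.exp (gJQ A t + ∑ i, b i * t i)
        ≤ (∑ i, |t i|) ^ k * Real.exp (Y * (∑ i, |t i|) - c * ∑ i, t i ^ 2) := by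
          exact mul_le_mul (hw t) (Real.exp_le_exp.2 (gJ_exponent_le hQ hb t))
            (Real.exp_nonneg _) (by positivity)
      _ = _ := rfl

lemma gJ_integrable_clm {A : Matrix ι ι ℝ} {c : ℝ} (hc : 0 < c)
    (hQ : ∀ t : ι → ℝ, gJQ A t ≤ -c * ∑ i, t i ^ 2) (e : ι → κ)
    {w : (ι → ℝ) → ℝ} (hwc : Continuous w) {k : ℕ} (hw : ∀ t, |w t| ≤ (∑ i, |t i|) ^ k)
    {Y : ℝ} {b : ι → ℝ} (hb : ∀ i, |b i| ≤ Y) :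
    Integrable (fun t : ι → ℝ => (w t * Real.exp (gJQ A t + ∑ i, b i * t i)) • gJL e t)
      (volume.restrict (gJS ι)) := by
  refine ((aux_integrable' (k+1) Y c hc).restrict (s := gJS ι)).mono'
    ?_ (ae_of_all _ fun t => ?_)
  · refine Continuous.aestronglyMeasurable ?_
    refine Continuous.fun_smul ?_ (gJL_continuous e)
    exact hwc.mul ((gJQ_continuous A).add (continuous_finset_sum _ fun i _ =>
      continuous_const.mul (continuous_apply i))).rexp
  · rw [norm_smul (w t * Real.exp (gJQ A t + ∑ i, b i * t i)) (gJL e t), Real.norm_eq_abs, abs_mul, abs_of_nonneg (Real.exp_nonneg _)]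
    have hρ : (0:ℝ) ≤ ∑ i, |t i| := Finset.sum_nonneg fun i _ => abs_nonneg _
    calc |w t| * Real.exp (gJQ A t + ∑ i, b i * t i) * ‖gJL e t‖
        ≤ ((∑ i, |t i|) ^ k * Real.exp (Y * (∑ i, |t i|) - c * ∑ i, t i ^ 2)) * (∑ i, |t i|) := by
          refine mul_le_mul ?_ (gJL_norm_le e t) (norm_nonneg _) (by positivity)
          exact mul_le_mul (hw t) (Real.exp_le_exp.2 (gJ_exponent_le hQ hb t))
            (Real.exp_nonneg _) (by positivity)
      _ = (∑ i, |t i|) ^ (k+1) * Real.exp (Y * (∑ i, |t i|) - c * ∑ i, t i ^ 2) := by ring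

lemma gJ_hasFDerivAt_y {A : Matrix ι ι ℝ} {c : ℝ} (hc : 0 < c)
    (hQ : ∀ t : ι → ℝ, gJQ A t ≤ -c * ∑ i, t i ^ 2) (e : ι → κ)
    {w : (ι → ℝ) → ℝ} (hwc : Continuous w) {k : ℕ} (hw : ∀ t, |w t| ≤ (∑ i, |t i|) ^ k)
    (y₀ : κ → ℝ) :
    HasFDerivAt (fun y : κ → ℝ =>
        ∫ t in gJS ι, w t * Real.exp (gJQ A t + ∑ i, y (e i) * t i))
      (∫ t in gJS ι, (w t * Real.exp (gJQ A t + ∑ i, y₀ (e i) * t i)) • gJL e t) y₀ := by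
  have hcont : ∀ y : κ → ℝ, Continuous fun t : ι → ℝ =>
      w t * Real.exp (gJQ A t + ∑ i, y (e i) * t i) := fun y =>
    hwc.mul ((gJQ_continuous A).add (continuous_finset_sum _ fun i _ =>
      continuous_const.mul (continuous_apply i))).rexp
  have hYb : ∀ y : κ → ℝ, ∀ i, |y (e i)| ≤ ‖y‖ := fun y i => by
    have := norm_le_pi_norm y (e i); rwa [Real.norm_eq_abs] at this
  refine hasFDerivAt_integral_of_dominated_of_fderiv_le (𝕜 := ℝ) (s := Metric.ball y₀ 1)
    (F' := fun (y : κ → ℝ) (t : ι → ℝ) =>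
      (w t * Real.exp (gJQ A t + ∑ i, y (e i) * t i)) • gJL e t)
    (bound := fun t : ι → ℝ =>
      (∑ i, |t i|) ^ (k+1) * Real.exp ((‖y₀‖ + 1) * (∑ i, |t i|) - c * ∑ i, t i ^ 2))
    (Metric.ball_mem_nhds y₀ one_pos) ?_ ?_ ?_ ?_ ?_ ?_
  · exact Filter.Eventually.of_forall fun y => (hcont y).aestronglyMeasurable
  · exact gJ_integrable_scalar hc hQ hwc hw (hYb y₀)
  · refine Continuous.aestronglyMeasurable ?_
    exact (hcont y₀).smul (gJL_continuous e)
  · refine ae_of_all _ fun t y hy => ?_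
    rw [norm_smul (w t * Real.exp (gJQ A t + ∑ i, y (e i) * t i)) (gJL e t),
      Real.norm_eq_abs, abs_mul, abs_of_nonneg (Real.exp_nonneg _)]
    have hρ : (0:ℝ) ≤ ∑ i, |t i| := Finset.sum_nonneg fun i _ => abs_nonneg _
    have hyn : ‖y‖ ≤ ‖y₀‖ + 1 := by
      have := norm_sub_norm_le y y₀
      have h2 : dist y y₀ < 1 := Metric.mem_ball.1 hy
      rw [dist_eq_norm] at h2
      linarith
    have hb : ∀ i, |y (e i)| ≤ ‖y₀‖ + 1 := fun i => (hYb y i).trans hyn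
    calc |w t| * Real.exp (gJQ A t + ∑ i, y (e i) * t i) * ‖gJL e t‖
        ≤ ((∑ i, |t i|) ^ k *
            Real.exp ((‖y₀‖ + 1) * (∑ i, |t i|) - c * ∑ i, t i ^ 2)) * (∑ i, |t i|) := by
          refine mul_le_mul ?_ (gJL_norm_le e t) (norm_nonneg _) (by positivity)
          exact mul_le_mul (hw t) (Real.exp_le_exp.2 (gJ_exponent_le hQ hb t))
            (Real.exp_nonneg _) (by positivity)
      _ = _ := by ring
  · exact (aux_integrable' (k+1) (‖y₀‖ + 1) c hc).restrict
  · refine ae_of_all _ fun t y _ => ?_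
    have hlin : HasFDerivAt (fun y : κ → ℝ => ∑ i, y (e i) * t i) (gJL e t) y := by
      have h1 : (fun y : κ → ℝ => ∑ i, y (e i) * t i) = fun y => gJL e t y := by
        funext y; rw [gJL_apply]; exact Finset.sum_congr rfl fun i _ => mul_comm _ _
      rw [h1]
      exact (gJL e t).hasFDerivAt
    have h2 : HasFDerivAt (fun y : κ → ℝ => gJQ A t + ∑ i, y (e i) * t i) (gJL e t) y :=
      hlin.const_add _
    have h3 := h2.exp
    have h4 := h3.const_mul (w t)
    show HasFDerivAt _ ((w t * Real.exp (gJQ A t + ∑ i, y (e i) * t i)) • gJL e t) y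
    rw [← smul_smul]
    exact h4

lemma gJ_hasDerivAt_x {A : Matrix ι ι ℝ} {c : ℝ} (hc : 0 < c)
    (hQ : ∀ t : ι → ℝ, gJQ A t ≤ -c * ∑ i, t i ^ 2) (a b : ι) (r : ℝ)
    {Y : ℝ} {bv : ι → ℝ} (hY : 0 ≤ Y) (hb : ∀ i, |bv i| ≤ Y) :
    HasDerivAt (fun s : ℝ =>
        ∫ t in gJS ι, Real.exp (gJQ A t + s * (r * (t a * t b)) + ∑ i, bv i * t i))
      (∫ t in gJS ι, (r * (t a * t b)) * Real.exp (gJQ A t + ∑ i, bv i * t i)) 0 := by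
  set n : ℝ := (Fintype.card ι : ℝ)
  have hn : 0 ≤ n := Nat.cast_nonneg _
  set ε : ℝ := c / (2 * (|r| * n + 1)) with hε
  have hεpos : 0 < ε := by positivity
  have hεle : ε * (|r| * n) ≤ c / 2 := by
    rw [hε, div_mul_eq_mul_div, div_le_div_iff₀ (by positivity) (by norm_num)]
    nlinarith [abs_nonneg r, hn, hc.le]
  have hcont : ∀ s : ℝ, Continuous fun t : ι → ℝ =>
      Real.exp (gJQ A t + s * (r * (t a * t b)) + ∑ i, bv i * t i) := fun s => by
    refine Real.continuous_exp.comp ?_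
    refine Continuous.add (Continuous.add (gJQ_continuous A) ?_) ?_
    · exact continuous_const.mul (continuous_const.mul ((continuous_apply a).mul
        (continuous_apply b)))
    · exact continuous_finset_sum _ fun i _ => continuous_const.mul (continuous_apply i)
  have key := hasDerivAt_integral_of_dominated_loc_of_deriv_le (𝕜 := ℝ) (s := Metric.ball 0 ε)
    (x₀ := 0) (μ := volume.restrict (gJS ι))
    (F := fun (s : ℝ) (t : ι → ℝ) =>
      Real.exp (gJQ A t + s * (r * (t a * t b)) + ∑ i, bv i * t i))
    (F' := fun (s : ℝ) (t : ι → ℝ) =>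
      (r * (t a * t b)) * Real.exp (gJQ A t + s * (r * (t a * t b)) + ∑ i, bv i * t i))
    (bound := fun t : ι → ℝ =>
      |r| * ((∑ i, |t i|) ^ 2 * Real.exp (Y * (∑ i, |t i|) - c/2 * ∑ i, t i ^ 2)))
    (Metric.ball_mem_nhds 0 hεpos)
    (Filter.Eventually.of_forall fun s => (hcont s).aestronglyMeasurable)
    ?_ ?_ ?_ ?_ ?_
  · -- massage conclusion
    have h0 : (fun t : ι → ℝ =>
        (r * (t a * t b)) * Real.exp (gJQ A t + 0 * (r * (t a * t b)) + ∑ i, bv i * t i))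
        = fun t : ι → ℝ => (r * (t a * t b)) * Real.exp (gJQ A t + ∑ i, bv i * t i) := by
      funext t; norm_num
    have := key.2
    rw [h0] at this
    exact this
  · -- integrability at 0
    have := gJ_integrable_scalar (w := fun _ : ι → ℝ => (1:ℝ)) (k := 0) hc hQ
      continuous_const (fun t => by simp) hb
    refine this.congr ?_
    refine ae_of_all _ fun t => ?_
    norm_num
  · exact (Continuous.aestronglyMeasurable (by
      exact (continuous_const.mul ((continuous_apply a).mul (continuous_apply b))).mul
        (hcont 0)))
  · -- bound
    refine ae_of_all _ fun t s hs => ?_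
    have hρ : (0:ℝ) ≤ ∑ i, |t i| := Finset.sum_nonneg fun i _ => abs_nonneg _
    have habs : |t a * t b| ≤ (∑ i, |t i|) ^ 2 := by
      rw [abs_mul, sq]
      exact mul_le_mul (Finset.single_le_sum (f := fun i => |t i|)
        (fun i _ => abs_nonneg _) (Finset.mem_univ a))
        (Finset.single_le_sum (f := fun i => |t i|) (fun i _ => abs_nonneg _)
          (Finset.mem_univ b)) (abs_nonneg _) hρ
    have hcs : (∑ i, |t i|) ^ 2 ≤ n * ∑ i, t i ^ 2 := by
      have := sq_sum_le_card_mul_sum_sq (s := (Finset.univ : Finset ι)) (f := fun i => |t i|)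
      simpa [sq_abs] using this
    have hsmall : s * (r * (t a * t b)) ≤ c/2 * ∑ i, t i ^ 2 := by
      have h1 : |s| ≤ ε := by
        have := Metric.mem_ball.1 hs
        rw [Real.dist_eq, sub_zero] at this
        exact this.le
      calc s * (r * (t a * t b)) ≤ |s * (r * (t a * t b))| := le_abs_self _
        _ = |s| * (|r| * |t a * t b|) := by rw [abs_mul, abs_mul]
        _ ≤ ε * (|r| * (n * ∑ i, t i ^ 2)) := by
            refine mul_le_mul h1 (mul_le_mul_of_nonneg_left (habs.trans hcs) (abs_nonneg _))
              (by positivity) hεpos.le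
        _ = (ε * (|r| * n)) * ∑ i, t i ^ 2 := by ring
        _ ≤ c/2 * ∑ i, t i ^ 2 := by
            refine mul_le_mul_of_nonneg_right hεle ?_
            exact Finset.sum_nonneg fun i _ => sq_nonneg _
    have hlin : ∑ i, bv i * t i ≤ Y * ∑ i, |t i| := by
      rw [Finset.mul_sum]
      refine Finset.sum_le_sum fun i _ => ?_
      calc bv i * t i ≤ |bv i * t i| := le_abs_self _
        _ = |bv i| * |t i| := abs_mul _ _
        _ ≤ Y * |t i| := mul_le_mul_of_nonneg_right (hb i) (abs_nonneg _)
    rw [Real.norm_eq_abs, abs_mul, abs_of_nonneg (Real.exp_nonneg _)]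
    calc |r * (t a * t b)| *
          Real.exp (gJQ A t + s * (r * (t a * t b)) + ∑ i, bv i * t i)
        ≤ (|r| * (∑ i, |t i|) ^ 2) *
          Real.exp (Y * (∑ i, |t i|) - c/2 * ∑ i, t i ^ 2) := by
          refine mul_le_mul ?_ (Real.exp_le_exp.2 ?_) (Real.exp_nonneg _) (by positivity)
          · rw [abs_mul]
            exact mul_le_mul_of_nonneg_left habs (abs_nonneg _)
          · have := hQ t
            linarith
      _ = _ := by ring
  · -- bound integrable
    exact ((aux_integrable' 2 Y (c/2) (by positivity)).const_mul |r|).restrict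
  · -- differentiability
    refine ae_of_all _ fun t s _ => ?_
    have h1 : HasDerivAt (fun s : ℝ => gJQ A t + s * (r * (t a * t b)) + ∑ i, bv i * t i)
        (r * (t a * t b)) s := by
      have := (hasDerivAt_mul_const (r * (t a * t b)) (x := s)).const_add (gJQ A t)
      exact this.add_const _
    have h2 := h1.exp
    show HasDerivAt _ ((r * (t a * t b)) *
      Real.exp (gJQ A t + s * (r * (t a * t b)) + ∑ i, bv i * t i)) s
    rw [show (r * (t a * t b)) *
      Real.exp (gJQ A t + s * (r * (t a * t b)) + ∑ i, bv i * t i) =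
      Real.exp (gJQ A t + s * (r * (t a * t b)) + ∑ i, bv i * t i) * (r * (t a * t b))
      from mul_comm _ _]
    exact h2

lemma sum_std_entries (d : ℕ) (J : Finset (Fin d)) (i j : Fin d) (hi : i ∈ J) (hj : j ∈ J)
    (t : {a // a ∈ J} → ℝ) :
    ∑ a : {a // a ∈ J}, ∑ b : {a // a ∈ J},
      Matrix.single i j (1:ℝ) a.1 b.1 * t a * t b = t ⟨i, hi⟩ * t ⟨j, hj⟩ := by
  classical
  have hcond : ∀ a b : {a // a ∈ J},
      Matrix.single i j (1:ℝ) a.1 b.1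
        = (if a = ⟨i, hi⟩ then (1:ℝ) else 0) * (if b = ⟨j, hj⟩ then (1:ℝ) else 0) := by
    intro a b
    simp only [Matrix.single, Matrix.of_apply]
    by_cases h1 : a = ⟨i, hi⟩ <;> by_cases h2 : b = ⟨j, hj⟩
    · subst h1; subst h2; simp
    · subst h1
      have h3 : j ≠ b.1 := fun h => h2 (Subtype.ext h.symm)
      simp [h3, h2]
    · have h3 : i ≠ a.1 := fun h => h1 (Subtype.ext h.symm)
      simp [h3, h1, h2]
    · have h3 : i ≠ a.1 := fun h => h1 (Subtype.ext h.symm)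
      simp [h3, h1, h2]
  simp only [hcond]
  rw [Finset.sum_eq_single (⟨i, hi⟩ : {a // a ∈ J})]
  · rw [Finset.sum_eq_single (⟨j, hj⟩ : {a // a ∈ J})]
    · simp
    · intro b _ hb; simp [hb]
    · simp
  · intro a _ ha
    simp [ha]
  · simp

lemma gJ_collapse {d : ℕ} {J : Finset (Fin d)} (a : Fin d) (ha : a ∈ J)
    (t : {a // a ∈ J} → ℝ) :
    (∑ k : {a // a ∈ J}, t k * (Pi.single (M := fun _ => ℝ) a 1) k.1) = t ⟨a, ha⟩ := by
  classical
  rw [Finset.sum_eq_single (⟨a, ha⟩ : {a // a ∈ J})]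
  · rw [show ((⟨a, ha⟩ : {a // a ∈ J}) : Fin d) = a from rfl, Pi.single_eq_same, mul_one]
  · intro b _ hb
    have hne : (b : Fin d) ≠ a := fun h => hb (Subtype.ext h)
    rw [Pi.single_eq_of_ne hne, mul_zero]
  · simp

/-- The function g_J(x,y): the integral over the positive orthant in the variables
(t_j)_{j ∈ J} of exp(∑_{i,j∈J} x_{ij} t_i t_j + ∑_{k∈J} y_k t_k); g_∅ = 1. -/
noncomputable def gJ (d : ℕ) (J : Finset (Fin d)) (x : Matrix (Fin d) (Fin d) ℝ)
    (y : Fin d → ℝ) : ℝ :=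
  ∫ t : {a // a ∈ J} → ℝ in {t | ∀ j, 0 ≤ t j},
    Real.exp (∑ i, ∑ j, x i.1 j.1 * t i * t j + ∑ k, y k.1 * t k)

/-- For J ⊆ {1,…,d} with −x_J positive definite:
∂g_J/∂x_{ij} = 2 ∂²g_J/∂y_i∂y_j if {i,j} ⊆ J with i < j;
∂g_J/∂x_{ii} = ∂²g_J/∂y_i² if i ∈ J; and ∂g_J/∂x_{ij} = 0 if {i,j} ⊄ J.
(The partial derivative in the independent variable x_{ij}, i < j, is the derivative
along the symmetric perturbation E_{ij} + E_{ji}.) -/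
theorem gJ_x_derivative (d : ℕ) (J : Finset (Fin d))
    (x : Matrix (Fin d) (Fin d) ℝ)
    (hx : (Matrix.of fun i j : {a // a ∈ J} => -x i.1 j.1).PosDef)
    (y : Fin d → ℝ) :
    (∀ i j : Fin d, i ∈ J → j ∈ J → i < j →
      deriv (fun s : ℝ =>
          gJ d J (x + s • (Matrix.single i j (1:ℝ)
            + Matrix.single j i (1:ℝ))) y) 0
        = 2 * fderiv ℝ (fun y' =>
            fderiv ℝ (fun y'' => gJ d J x y'') y' (Pi.single j 1)) y
            (Pi.single i 1)) ∧
    (∀ i ∈ J,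
      deriv (fun s : ℝ => gJ d J (x + s • Matrix.single i i (1:ℝ)) y) 0
        = fderiv ℝ (fun y' =>
            fderiv ℝ (fun y'' => gJ d J x y'') y' (Pi.single i 1)) y
            (Pi.single i 1)) ∧
    (∀ i j : Fin d, ¬(i ∈ J ∧ j ∈ J) →
      deriv (fun s : ℝ =>
          gJ d J (x + s • (Matrix.single i j (1:ℝ)
            + Matrix.single j i (1:ℝ))) y) 0 = 0) := by
  classical
  obtain ⟨c, hc, hcle⟩ := posdef_quadratic_le hx
  set A : Matrix {a // a ∈ J} {a // a ∈ J} ℝ := Matrix.of fun i j => x i.1 j.1 with hA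
  have hQ : ∀ t : {a // a ∈ J} → ℝ, gJQ A t ≤ -c * ∑ i, t i ^ 2 := by
    intro t
    have h1 := hcle t
    have h2 : t ⬝ᵥ (Matrix.of fun i j : {a // a ∈ J} => -x i.1 j.1) *ᵥ t = -gJQ A t := by
      simp only [gJQ, dotProduct, mulVec, Matrix.of_apply, hA]
      rw [← Finset.sum_neg_distrib]
      refine Finset.sum_congr rfl fun i _ => ?_
      rw [Finset.mul_sum, ← Finset.sum_neg_distrib]
      exact Finset.sum_congr rfl fun j _ => by ring
    rw [h2] at h1
    linarith
  have hYb : ∀ (y' : Fin d → ℝ) (k : {a // a ∈ J}), |y' k.1| ≤ ‖y'‖ := fun y' k => by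
    have := norm_le_pi_norm y' k.1; rwa [Real.norm_eq_abs] at this
  set e : {a // a ∈ J} → Fin d := fun k => k.1 with he
  -- first fderiv applied
  have happly : ∀ (a : Fin d) (ha : a ∈ J) (y' : Fin d → ℝ),
      fderiv ℝ (fun y'' => gJ d J x y'') y' (Pi.single a 1)
        = ∫ t in gJS {a // a ∈ J},
            t ⟨a, ha⟩ * Real.exp (gJQ A t + ∑ k, y' (e k) * t k) := by
    intro a ha y'
    have hw0 : ∀ t : {a // a ∈ J} → ℝ, |(fun _ : {a // a ∈ J} → ℝ => (1:ℝ)) t|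
        ≤ (∑ k, |t k|) ^ 0 := fun t => by simp
    have hF := gJ_hasFDerivAt_y hc hQ e (continuous_const (y := (1:ℝ))) hw0 y'
    have hgj : (fun y'' : Fin d → ℝ => gJ d J x y'')
        = fun y'' => ∫ t in gJS {a // a ∈ J},
            (fun _ : {a // a ∈ J} → ℝ => (1:ℝ)) t
              * Real.exp (gJQ A t + ∑ k, y'' (e k) * t k) := by
      funext y''
      unfold gJ
      refine integral_congr_ae (ae_of_all _ fun t => ?_)
      simp only [one_mul]
      rfl
    have hF' : HasFDerivAt (fun y'' : Fin d → ℝ => gJ d J x y'')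
        (∫ t in gJS {a // a ∈ J},
          ((fun _ : {a // a ∈ J} → ℝ => (1:ℝ)) t
            * Real.exp (gJQ A t + ∑ k, y' (e k) * t k)) • gJL e t) y' := by
      rw [hgj]; exact hF
    rw [hF'.fderiv]
    rw [ContinuousLinearMap.integral_apply (gJ_integrable_clm hc hQ e (continuous_const (y := (1:ℝ))) hw0
      (fun k => hYb y' k))]
    refine integral_congr_ae (ae_of_all _ fun t => ?_)
    simp only [ContinuousLinearMap.smul_apply, gJL_apply, smul_eq_mul, one_mul]
    rw [gJ_collapse a ha t]
    simp only [he]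
    ring
  -- second fderiv
  have hsnd : ∀ (a b : Fin d) (ha : a ∈ J) (hb : b ∈ J),
      fderiv ℝ (fun y' => ∫ t in gJS {a // a ∈ J},
          t ⟨b, hb⟩ * Real.exp (gJQ A t + ∑ k, y' (e k) * t k)) y (Pi.single a 1)
        = ∫ t in gJS {a // a ∈ J},
            (t ⟨a, ha⟩ * t ⟨b, hb⟩) * Real.exp (gJQ A t + ∑ k, y (e k) * t k) := by
    intro a b ha hb
    have hw : ∀ t : {a // a ∈ J} → ℝ,
        |(fun t : {a // a ∈ J} → ℝ => t ⟨b, hb⟩) t| ≤ (∑ k, |t k|) ^ 1 := fun t => by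
      rw [pow_one]
      exact Finset.single_le_sum (f := fun k => |t k|) (fun k _ => abs_nonneg _)
        (Finset.mem_univ _)
    have hF := gJ_hasFDerivAt_y hc hQ e (continuous_apply (⟨b, hb⟩ : {a // a ∈ J})) hw y
    rw [hF.fderiv]
    rw [ContinuousLinearMap.integral_apply (gJ_integrable_clm hc hQ e
      (continuous_apply (⟨b, hb⟩ : {a // a ∈ J})) hw (fun k => hYb y k))]
    refine integral_congr_ae (ae_of_all _ fun t => ?_)
    simp only [ContinuousLinearMap.smul_apply, gJL_apply, smul_eq_mul]
    rw [gJ_collapse a ha t]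
    simp only [he]
    ring
  refine ⟨?_, ?_, ?_⟩
  · -- off-diagonal case
    intro i j hi hj hij
    have hfun : (fun s : ℝ => gJ d J (x + s • (Matrix.single i j (1:ℝ)
          + Matrix.single j i (1:ℝ))) y)
        = fun s : ℝ => ∫ t in gJS {a // a ∈ J},
            Real.exp (gJQ A t + s * ((2:ℝ) * (t ⟨i, hi⟩ * t ⟨j, hj⟩))
              + ∑ k, y (e k) * t k) := by
      funext s
      unfold gJ
      refine integral_congr_ae (ae_of_all _ fun t => ?_)
      show Real.exp _ = Real.exp _
      have hterm : ∀ a b : {a // a ∈ J},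
          (x + s • (Matrix.single i j (1:ℝ)
            + Matrix.single j i (1:ℝ))) a.1 b.1 * t a * t b
          = x a.1 b.1 * t a * t b
            + s * (Matrix.single i j (1:ℝ) a.1 b.1 * t a * t b)
            + s * (Matrix.single j i (1:ℝ) a.1 b.1 * t a * t b) := by
        intro a b
        simp only [Matrix.add_apply, Matrix.smul_apply, smul_eq_mul]
        ring
      have hsplit : ∑ a : {a // a ∈ J}, ∑ b : {a // a ∈ J},
          (x + s • (Matrix.single i j (1:ℝ)
            + Matrix.single j i (1:ℝ))) a.1 b.1 * t a * t b
          = gJQ A t + s * ((2:ℝ) * (t ⟨i, hi⟩ * t ⟨j, hj⟩)) := by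
        simp only [hterm, Finset.sum_add_distrib, ← Finset.mul_sum]
        rw [sum_std_entries d J i j hi hj t, sum_std_entries d J j i hj hi t]
        have hgq : gJQ A t
            = ∑ a : {a // a ∈ J}, ∑ b : {a // a ∈ J}, x a.1 b.1 * t a * t b := rfl
        rw [hgq]; ring
      rw [hsplit]
    rw [hfun]
    have hder := gJ_hasDerivAt_x (A := A) hc hQ (⟨i, hi⟩ : {a // a ∈ J}) ⟨j, hj⟩ 2
      (bv := fun k => y (e k)) (norm_nonneg y) (fun k => hYb y k)
    rw [hder.deriv]
    have h1 : (fun y' => fderiv ℝ (fun y'' => gJ d J x y'') y' (Pi.single j 1))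
        = fun y' => ∫ t in gJS {a // a ∈ J},
            t ⟨j, hj⟩ * Real.exp (gJQ A t + ∑ k, y' (e k) * t k) :=
      funext fun y' => happly j hj y'
    rw [h1, hsnd i j hi hj]
    rw [← integral_const_mul]
    refine integral_congr_ae (ae_of_all _ fun t => ?_)
    show (2 * (t ⟨i, hi⟩ * t ⟨j, hj⟩)) * Real.exp (gJQ A t + ∑ k, y (e k) * t k)
      = 2 * ((t ⟨i, hi⟩ * t ⟨j, hj⟩) * Real.exp (gJQ A t + ∑ k, y (e k) * t k))
    ring
  · -- diagonal case
    intro i hi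
    have hfun : (fun s : ℝ => gJ d J (x + s • Matrix.single i i (1:ℝ)) y)
        = fun s : ℝ => ∫ t in gJS {a // a ∈ J},
            Real.exp (gJQ A t + s * ((1:ℝ) * (t ⟨i, hi⟩ * t ⟨i, hi⟩))
              + ∑ k, y (e k) * t k) := by
      funext s
      unfold gJ
      refine integral_congr_ae (ae_of_all _ fun t => ?_)
      show Real.exp _ = Real.exp _
      have hterm : ∀ a b : {a // a ∈ J},
          (x + s • Matrix.single i i (1:ℝ)) a.1 b.1 * t a * t b
          = x a.1 b.1 * t a * t b
            + s * (Matrix.single i i (1:ℝ) a.1 b.1 * t a * t b) := by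
        intro a b
        simp only [Matrix.add_apply, Matrix.smul_apply, smul_eq_mul]
        ring
      have hsplit : ∑ a : {a // a ∈ J}, ∑ b : {a // a ∈ J},
          (x + s • Matrix.single i i (1:ℝ)) a.1 b.1 * t a * t b
          = gJQ A t + s * ((1:ℝ) * (t ⟨i, hi⟩ * t ⟨i, hi⟩)) := by
        simp only [hterm, Finset.sum_add_distrib, ← Finset.mul_sum]
        rw [sum_std_entries d J i i hi hi t]
        have hgq : gJQ A t
            = ∑ a : {a // a ∈ J}, ∑ b : {a // a ∈ J}, x a.1 b.1 * t a * t b := rfl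
        rw [hgq]; ring
      rw [hsplit]
    rw [hfun]
    have hder := gJ_hasDerivAt_x (A := A) hc hQ (⟨i, hi⟩ : {a // a ∈ J}) ⟨i, hi⟩ 1
      (bv := fun k => y (e k)) (norm_nonneg y) (fun k => hYb y k)
    rw [hder.deriv]
    have h1 : (fun y' => fderiv ℝ (fun y'' => gJ d J x y'') y' (Pi.single i 1))
        = fun y' => ∫ t in gJS {a // a ∈ J},
            t ⟨i, hi⟩ * Real.exp (gJQ A t + ∑ k, y' (e k) * t k) :=
      funext fun y' => happly i hi y'
    rw [h1, hsnd i i hi hi]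
    refine integral_congr_ae (ae_of_all _ fun t => ?_)
    show (1 * (t ⟨i, hi⟩ * t ⟨i, hi⟩)) * Real.exp (gJQ A t + ∑ k, y (e k) * t k)
      = (t ⟨i, hi⟩ * t ⟨i, hi⟩) * Real.exp (gJQ A t + ∑ k, y (e k) * t k)
    ring
  · -- outside J
    intro i j hij
    have hconst : (fun s : ℝ => gJ d J (x + s • (Matrix.single i j (1:ℝ)
        + Matrix.single j i (1:ℝ))) y) = fun _ : ℝ => gJ d J x y := by
      funext s
      unfold gJ
      refine integral_congr_ae (ae_of_all _ fun t => ?_)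
      show Real.exp _ = Real.exp _
      have hz : ∀ a b : {a // a ∈ J},
          (x + s • (Matrix.single i j (1:ℝ)
            + Matrix.single j i (1:ℝ))) a.1 b.1 = x a.1 b.1 := by
        intro a b
        have h1 : Matrix.single i j (1:ℝ) a.1 b.1 = 0 := by
          simp only [Matrix.single, Matrix.of_apply, ite_eq_right_iff, one_ne_zero]
          rintro ⟨rfl, rfl⟩
          exact absurd ⟨a.2, b.2⟩ hij
        have h2 : Matrix.single j i (1:ℝ) a.1 b.1 = 0 := by
          simp only [Matrix.single, Matrix.of_apply, ite_eq_right_iff, one_ne_zero]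
          rintro ⟨rfl, rfl⟩
          exact absurd ⟨b.2, a.2⟩ hij
        simp only [Matrix.add_apply, Matrix.smul_apply, smul_eq_mul, h1, h2]
        ring
      congr 1
      congr 1
      refine Finset.sum_congr rfl fun a _ => Finset.sum_congr rfl fun b _ => ?_
      rw [hz a b]
    rw [hconst]
    exact deriv_const _ _
end gJderiv
end

section
/- For each sign vector ε ∈ {±1}^d let E_ε = {t ∈ ℝ^d : ε_i t_i > 0 for all i} and, for −x symmetric positive definite and y ∈ ℝ^d, define g_ε(x,y) = ∫_{E_ε} exp(tᵀxt + yᵀt) dt. Then the 2^d functions {g_ε : ε ∈ {±1}^d}, viewed as functions of (x,y) on the domain where −x is positive definite, are linearly independent over ℝ. -/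
open MeasureTheory Real Matrix Set

noncomputable def Fp (a : ℝ) : ℝ := ∫ t in Set.Ioi (0:ℝ), Real.exp (-t^2 + a*t)

lemma integrable_gauss (a : ℝ) : Integrable (fun t : ℝ => Real.exp (-t^2 + a*t)) := by
  have he : (fun t : ℝ => Real.exp (-t^2 + a*t))
      = fun t => Real.exp (a^2/4) * Real.exp (-(1:ℝ)*(t - a/2)^2) := by
    funext t; rw [← Real.exp_add]; ring_nf
  rw [he]
  exact (((integrable_exp_neg_mul_sq one_pos).comp_sub_right (a/2)).const_mul _)

lemma Fp_pos (a : ℝ) : 0 < Fp a := by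
  rw [Fp]
  refine (setIntegral_pos_iff_support_of_nonneg_ae
    (Filter.Eventually.of_forall fun t => (Real.exp_pos _).le)
    (integrable_gauss a).integrableOn).2 ?_
  refine lt_of_lt_of_le ?_ (measure_mono
    (fun x hx => ⟨Real.exp_ne_zero _, hx⟩ :
      Set.Ioi (0:ℝ) ⊆ Function.support (fun t : ℝ => Real.exp (-t^2 + a*t)) ∩ Set.Ioi 0))
  simp [Real.volume_Ioi]

lemma Fp_mono : Monotone Fp := by
  intro a b hab
  refine setIntegral_mono_on (integrable_gauss a).integrableOn
    (integrable_gauss b).integrableOn measurableSet_Ioi ?_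
  intro t ht
  have : a * t ≤ b * t := mul_le_mul_of_nonneg_right hab (le_of_lt ht)
  exact Real.exp_le_exp.2 (by linarith)

lemma Fp_neg_le {s : ℝ} (hs : 0 < s) : Fp (-s) ≤ 1 / s := by
  have h1 : Fp (-s) ≤ ∫ t in Set.Ioi (0:ℝ), Real.exp (-s * t) := by
    refine setIntegral_mono_on (integrable_gauss _).integrableOn
      (exp_neg_integrableOn_Ioi 0 hs) measurableSet_Ioi ?_
    intro t ht
    exact Real.exp_le_exp.2 (by nlinarith [sq_nonneg t])
  have h2 : (∫ t in Set.Ioi (0:ℝ), Real.exp (-s * t)) = 1 / s := by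
    have h3 := integral_comp_mul_left_Ioi (fun u => Real.exp (-u)) 0 hs
    simp only [mul_zero, smul_eq_mul] at h3
    rw [integral_exp_neg_Ioi_zero] at h3
    simp only [neg_mul] at h3 ⊢
    rw [h3]; field_simp
  linarith

lemma Fm_eq (a : ℝ) :
    (∫ t in Set.Iio (0:ℝ), Real.exp (-t^2 + a*t)) = Fp (-a) := by
  rw [Fp, ← integral_Iic_eq_integral_Iio,
    show ((0:ℝ)) = -(0:ℝ) by norm_num, ← integral_comp_neg_Ioi]
  have : ∀ x : ℝ, Real.exp (-(-x)^2 + a * (-x)) = Real.exp (-x^2 + (-a)*x) := by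
    intro x; ring_nf
  simp_rw [this]
  norm_num

lemma orthant_integral_factor {d : ℕ} (ε : Fin d → Bool) (y : Fin d → ℝ) :
    (∫ t in {t : Fin d → ℝ | ∀ i, if ε i then 0 < t i else t i < 0},
      Real.exp (∑ i, ∑ j, (-1 : Matrix (Fin d) (Fin d) ℝ) i j * t i * t j + ∑ i, y i * t i))
    = ∏ i, Fp (if ε i then y i else -(y i)) := by
  set T : Fin d → Set ℝ := fun i => if ε i then Set.Ioi 0 else Set.Iio 0 with hT
  have hTm : ∀ i, MeasurableSet (T i) := by
    intro i; rw [hT]; dsimp only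
    split
    exacts [measurableSet_Ioi, measurableSet_Iio]
  have hset : {t : Fin d → ℝ | ∀ i, if ε i then 0 < t i else t i < 0} = Set.univ.pi T := by
    ext t
    simp only [Set.mem_setOf_eq, Set.mem_pi, Set.mem_univ, forall_true_left, hT]
    refine forall_congr' fun i => ?_
    by_cases hi : ε i <;> simp [hi]
  have hexp : ∀ t : Fin d → ℝ,
      Real.exp (∑ i, ∑ j, (-1 : Matrix (Fin d) (Fin d) ℝ) i j * t i * t j + ∑ i, y i * t i)
      = ∏ i, Real.exp (-(t i)^2 + y i * t i) := by
    intro t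
    rw [← Real.exp_sum]
    congr 1
    rw [← Finset.sum_add_distrib]
    refine Finset.sum_congr rfl fun i _ => ?_
    have : ∑ j, (-1 : Matrix (Fin d) (Fin d) ℝ) i j * t i * t j = -(t i)^2 := by
      rw [Finset.sum_eq_single i]
      · simp [Matrix.neg_apply, Matrix.one_apply]; ring
      · intro j _ hj
        simp [Matrix.neg_apply, Matrix.one_apply_ne (Ne.symm hj)]
      · simp
    rw [this]
  simp_rw [hexp]
  rw [hset, ← integral_indicator (MeasurableSet.univ_pi hTm)]
  have hind : (Set.univ.pi T).indicator (fun t : Fin d → ℝ => ∏ i, Real.exp (-(t i)^2 + y i * t i))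
      = fun t => ∏ i, (T i).indicator (fun u => Real.exp (-u^2 + y i * u)) (t i) := by
    funext t
    by_cases ht : t ∈ Set.univ.pi T
    · rw [Set.indicator_of_mem ht]
      exact Finset.prod_congr rfl fun i _ =>
        (Set.indicator_of_mem (ht i (Set.mem_univ i))
          (fun u => Real.exp (-u^2 + y i * u))).symm
    · rw [Set.indicator_of_notMem ht]
      rw [Set.mem_pi] at ht
      push_neg at ht
      obtain ⟨i, -, hi⟩ := ht
      exact (Finset.prod_eq_zero (Finset.mem_univ i)
        (Set.indicator_of_notMem hi _)).symm
  rw [hind,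
    MeasureTheory.integral_fintype_prod_volume_eq_prod (ι := Fin d)
      (fun i => (T i).indicator (fun u => Real.exp (-u^2 + y i * u)))]
  refine Finset.prod_congr rfl fun i _ => ?_
  rw [integral_indicator (hTm i), hT]
  dsimp only
  cases hi : ε i
  · simp only [Bool.false_eq_true, if_false]
    exact Fm_eq (y i)
  · simp only [if_true]
    rw [Fp]

/-- For ε ∈ {±1}^d (encoded by ε : Fin d → Bool, true ↔ +1) let
E_ε = {t : ε_i t_i > 0 ∀i} and g_ε(x,y) = ∫_{E_ε} exp(tᵀxt + yᵀt) dt. Then the 2^d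
functions g_ε, as functions of (x,y) on the domain where −x is positive definite,
are linearly independent over ℝ. -/
theorem orthant_integrals_linearly_independent (d : ℕ)
    (c : (Fin d → Bool) → ℝ)
    (h : ∀ (x : Matrix (Fin d) (Fin d) ℝ) (y : Fin d → ℝ), (-x).PosDef →
      ∑ ε : Fin d → Bool, c ε *
        ∫ t in {t : Fin d → ℝ | ∀ i, if ε i then 0 < t i else t i < 0},
          Real.exp (∑ i, ∑ j, x i j * t i * t j + ∑ i, y i * t i) = 0) :
    ∀ ε : Fin d → Bool, c ε = 0 := by
  intro ε
  have hpd : (-(-1 : Matrix (Fin d) (Fin d) ℝ)).PosDef := by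
    rw [neg_neg]; exact Matrix.PosDef.one
  have key : ∀ s : ℝ, 0 < s →
      ∑ ε' : Fin d → Bool, c ε' * ∏ i, Fp (if ε' i = ε i then s else -s) = 0 := by
    intro s hs
    have hy := h (-1) (fun i => if ε i then s else -s) hpd
    simp_rw [orthant_integral_factor] at hy
    convert hy using 2 with ε'
    congr 1
    refine Finset.prod_congr rfl fun i _ => ?_
    congr 1
    by_cases h1 : ε' i <;> by_cases h2 : ε i <;> simp [h1, h2]
  -- d = 0 case and main case
  rcases isEmpty_or_nonempty (Fin d) with hd | hd
  · have h0 := key 1 one_pos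
    have huniv : (Finset.univ : Finset (Fin d → Bool)) = {ε} := by
      apply Finset.eq_singleton_iff_unique_mem.2
      exact ⟨Finset.mem_univ _, fun x _ => funext fun i => (hd.false i).elim⟩
    rw [huniv, Finset.sum_singleton] at h0
    simpa using h0
  · by_contra hne
    set C : ℝ := ∑ ε' : Fin d → Bool, |c ε'| with hC
    have hC0 : 0 ≤ C := Finset.sum_nonneg fun _ _ => abs_nonneg _
    set K : ℝ := C / Fp 0 with hK
    have hK0 : 0 ≤ K := div_nonneg hC0 (Fp_pos 0).le
    have main : ∀ s : ℝ, 0 < s → |c ε| * s ≤ K := by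
      intro s hs
      have hks := key s hs
      have hsplit : c ε * ∏ i, Fp (if (ε i = ε i) then s else -s)
          = - ∑ ε' ∈ Finset.univ.erase ε, c ε' * ∏ i, Fp (if ε' i = ε i then s else -s) := by
        have := Finset.add_sum_erase Finset.univ
          (fun ε' => c ε' * ∏ i, Fp (if ε' i = ε i then s else -s)) (Finset.mem_univ ε)
        rw [← this] at hks
        beta_reduce at hks
        linarith
    -- the ε-term equals c ε * Fp s ^ d
      have hεterm : (∏ i, Fp (if (ε i = ε i) then s else -s)) = Fp s ^ d := by
        simp [Finset.prod_const]
      -- bound each other term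
      obtain ⟨i0⟩ := hd
      have hbound : ∀ ε' : Fin d → Bool, ε' ≠ ε →
          (∏ i, Fp (if ε' i = ε i then s else -s)) ≤ Fp (-s) * Fp s ^ (d - 1) := by
        intro ε' hne'
        obtain ⟨j, hj⟩ : ∃ j, ε' j ≠ ε j := Function.ne_iff.1 hne'
        rw [← Finset.mul_prod_erase Finset.univ _ (Finset.mem_univ j)]
        have h1 : Fp (if ε' j = ε j then s else -s) = Fp (-s) := by
          rw [if_neg hj]
        rw [h1]
        have h2 : (∏ i ∈ Finset.univ.erase j, Fp (if ε' i = ε i then s else -s))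
            ≤ ∏ i ∈ Finset.univ.erase j, Fp s := by
          refine Finset.prod_le_prod (fun i _ => (Fp_pos _).le) fun i _ => ?_
          split
          · exact le_refl _
          · exact Fp_mono (by linarith)
        have h3 : (∏ _i ∈ Finset.univ.erase j, Fp s) = Fp s ^ (d - 1) := by
          rw [Finset.prod_const, Finset.card_erase_of_mem (Finset.mem_univ j),
            Finset.card_univ, Fintype.card_fin]
        calc Fp (-s) * ∏ i ∈ Finset.univ.erase j, Fp (if ε' i = ε i then s else -s)
            ≤ Fp (-s) * ∏ _i ∈ Finset.univ.erase j, Fp s :=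
              mul_le_mul_of_nonneg_left h2 (Fp_pos _).le
          _ = Fp (-s) * Fp s ^ (d - 1) := by rw [h3]
      have habs : |c ε| * Fp s ^ d ≤ C * (Fp (-s) * Fp s ^ (d - 1)) := by
        rw [← hεterm] at *
        calc |c ε| * ∏ i, Fp (if (ε i = ε i) then s else -s)
            = |c ε * ∏ i, Fp (if (ε i = ε i) then s else -s)| := by
              rw [abs_mul, abs_of_nonneg (Finset.prod_nonneg fun i _ => (Fp_pos _).le)]
          _ = |∑ ε' ∈ Finset.univ.erase ε, c ε' * ∏ i, Fp (if ε' i = ε i then s else -s)| := by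
              rw [hsplit, abs_neg]
          _ ≤ ∑ ε' ∈ Finset.univ.erase ε, |c ε' * ∏ i, Fp (if ε' i = ε i then s else -s)| :=
              Finset.abs_sum_le_sum_abs _ _
          _ ≤ ∑ ε' ∈ Finset.univ.erase ε, |c ε'| * (Fp (-s) * Fp s ^ (d - 1)) := by
              refine Finset.sum_le_sum fun ε' hε' => ?_
              rw [abs_mul, abs_of_nonneg (Finset.prod_nonneg fun i _ => (Fp_pos _).le)]
              exact mul_le_mul_of_nonneg_left
                (hbound ε' (Finset.ne_of_mem_erase hε')) (abs_nonneg _)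
          _ ≤ C * (Fp (-s) * Fp s ^ (d - 1)) := by
              rw [← Finset.sum_mul]
              refine mul_le_mul_of_nonneg_right ?_
                (mul_nonneg (Fp_pos _).le (pow_nonneg (Fp_pos _).le _))
              exact Finset.sum_le_sum_of_subset_of_nonneg (Finset.erase_subset _ _)
                (fun _ _ _ => abs_nonneg _)
          _ = C * (Fp (-s) * Fp s ^ (d - 1)) := rfl
      -- cancel Fp s ^ (d-1)
      have hdpos : 0 < d := i0.pos
      have hd1 : d = (d - 1) + 1 := (Nat.succ_pred_eq_of_pos hdpos).symm
      have hpow : Fp s ^ d = Fp s * Fp s ^ (d - 1) := by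
        conv_lhs => rw [hd1]
        rw [pow_succ]; ring
      rw [hpow] at habs
      have hcancel : |c ε| * Fp s ≤ C * Fp (-s) := by
        have hp : 0 < Fp s ^ (d - 1) := pow_pos (Fp_pos _) _
        nlinarith [hp]
      have hFs : Fp 0 ≤ Fp s := Fp_mono hs.le
      have hFneg : Fp (-s) ≤ 1 / s := Fp_neg_le hs
      have h4 : |c ε| * Fp 0 ≤ C * (1 / s) := by
        nlinarith [abs_nonneg (c ε), hC0, hcancel]
      have hKC : K * Fp 0 = C := by
        rw [hK, div_mul_cancel₀]
        exact (Fp_pos 0).ne'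
      have h5 : |c ε| * Fp 0 * s ≤ C := by
        have h6 := mul_le_mul_of_nonneg_right h4 hs.le
        calc |c ε| * Fp 0 * s ≤ C * (1/s) * s := h6
          _ = C := by field_simp
      nlinarith [Fp_pos 0]
    have hpos : 0 < |c ε| := abs_pos.2 hne
    have hfin := main ((K + 1) / |c ε|) (by positivity)
    rw [mul_div_cancel₀ _ hpos.ne'] at hfin
    linarith
end
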